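/- arXiv:0707.0111 — 2 statements merged into one kernel-verified Lean document; each statement's English description precedes it below -/
import Mathlib

section
/- Let Ω ⊆ ℂⁿ be an open neighborhood of the closed unit polydisk and φ : Ω → ℝ a continuous plurisubharmonic function. Then for every r ∈ (0, 1), every ε ∈ (0, 1], and every x ∈ Δⁿ with max_i |x_i| ≤ 1 − r, one has V_ε^φ(x) ≤ (π r²)^{−n} · (sup_{z ∈ closed Δⁿ} e^{φ(z)}) · (sup_{z ∈ closed Δⁿ} e^{−φ(z)}). In particular, for every compact K ⊂ Δⁿ there is a constant C_K, independent of ε ∈ (0, 1], with V_ε^φ ≤ C_K on K. -/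
open MeasureTheory Set
open scoped ENNReal NNReal

noncomputable section

def elog (t : ℝ) : EReal := if t ≤ 0 then (⊥ : EReal) else ((Real.log t : ℝ) : EReal)

def erealToENNReal (x : EReal) : ℝ≥0∞ :=
  if x = ⊤ then ⊤ else ENNReal.ofReal x.toReal

def eintegral {α : Type*} [MeasurableSpace α] (μ : Measure α) (u : α → EReal) : EReal :=
  ((∫⁻ x, erealToENNReal (u x) ∂μ : ℝ≥0∞) : EReal)
    - ((∫⁻ x, erealToENNReal (-(u x)) ∂μ : ℝ≥0∞) : EReal)

def circleMean (u : ℝ → EReal) : EReal :=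
  (((2 * Real.pi)⁻¹ : ℝ) : EReal) *
    eintegral (volume.restrict (Set.Ioc (0 : ℝ) (2 * Real.pi))) u

def IsPSHOn {n : ℕ} (Ω : Set (Fin n → ℂ)) (u : (Fin n → ℂ) → EReal) : Prop :=
  UpperSemicontinuousOn u Ω ∧
  ∀ a ∈ Ω, ∀ b : Fin n → ℂ, ∀ r : ℝ, 0 < r →
    (∀ l : ℂ, ‖l‖ ≤ r → a + l • b ∈ Ω) →
    u a ≤ circleMean (fun θ : ℝ =>
      u (a + (((r : ℂ) * Complex.exp (θ * Complex.I)) • b)))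

def openPolydisk (n : ℕ) : Set (Fin n → ℂ) := {z | ∀ i, ‖z i‖ < 1}

def closedPolydisk (n : ℕ) : Set (Fin n → ℂ) := {z | ∀ i, ‖z i‖ ≤ 1}

/-- The class `𝒮_ε(φ)` of normalized competitors: upper semicontinuous
`f : Ω → [0,∞)` with `log f + ε·φ` plurisubharmonic on `Ω` and `∫_{Δⁿ} f dλ ≤ 1`. -/
def Scal {n : ℕ} (Ω : Set (Fin n → ℂ)) (φ : (Fin n → ℂ) → ℝ) (ε : ℝ) :
    Set ((Fin n → ℂ) → ℝ) :=
  {f | (∀ z, 0 ≤ f z) ∧ UpperSemicontinuousOn f Ω ∧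
    IsPSHOn Ω (fun z => elog (f z) + ((ε * φ z : ℝ) : EReal)) ∧
    (∫⁻ z in openPolydisk n, ENNReal.ofReal (f z)) ≤ 1}

/-- The envelope `V_ε^φ(x) = sup{f(x) : f ∈ 𝒮_ε(φ)}`, valued in `[0,∞]`. -/
def Venv {n : ℕ} (Ω : Set (Fin n → ℂ)) (φ : (Fin n → ℂ) → ℝ) (ε : ℝ)
    (x : Fin n → ℂ) : ℝ≥0∞ :=
  ⨆ f ∈ Scal Ω φ ε, ENNReal.ofReal (f x)


namespace UUE


lemma coe_ennreal_eq (S : ℝ≥0∞) (h : S ≠ ⊤) : (S : EReal) = ((S.toReal : ℝ) : EReal) := by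
  lift S to ℝ≥0 using h; rfl

lemma usc_open_sublevel {α : Type*} [TopologicalSpace α] {Ω : Set α} (hΩ : IsOpen Ω)
    {f : α → ℝ} (hf : UpperSemicontinuousOn f Ω) (c : ℝ) :
    IsOpen {z | z ∈ Ω ∧ f z < c} := by
  rw [isOpen_iff_mem_nhds]
  rintro z ⟨hzΩ, hz⟩
  have h1 := hf z hzΩ c hz
  rw [nhdsWithin_eq_nhds.mpr (hΩ.mem_nhds hzΩ)] at h1
  filter_upwards [h1, hΩ.mem_nhds hzΩ] with w hw1 hw2
  exact ⟨hw2, hw1⟩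

lemma usc_indicator_measurable {α : Type*} [TopologicalSpace α] [MeasurableSpace α]
    [OpensMeasurableSpace α] {Ω : Set α} (hΩ : IsOpen Ω)
    {f : α → ℝ} (hf : UpperSemicontinuousOn f Ω) :
    Measurable (Ω.indicator f) := by
  apply measurable_of_Iio
  intro c
  by_cases hc : (0:ℝ) < c
  · have h : Ω.indicator f ⁻¹' Iio c = {z | z ∈ Ω ∧ f z < c} ∪ Ωᶜ := by
      ext z; by_cases hz : z ∈ Ω <;> simp [Set.indicator_apply, hz, hc]
    rw [h]
    exact (usc_open_sublevel hΩ hf c).measurableSet.union hΩ.measurableSet.compl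
  · have h : Ω.indicator f ⁻¹' Iio c = {z | z ∈ Ω ∧ f z < c} := by
      ext z; by_cases hz : z ∈ Ω <;> simp [Set.indicator_apply, hz, hc]
    rw [h]
    exact (usc_open_sublevel hΩ hf c).measurableSet

lemma add_smul_single {n : ℕ} (z : Fin n → ℂ) (i : Fin n) (c : ℂ) :
    z + c • (Pi.single i (1:ℂ) : Fin n → ℂ) = Function.update z i (z i + c) := by
  funext j
  by_cases h : j = i
  · subst h; simp
  · simp [h, Pi.single_eq_of_ne h]

lemma ofReal_max (a : ℝ) : ENNReal.ofReal a = ENNReal.ofReal (max a 0) := by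
  rcases le_total a 0 with h | h
  · rw [max_eq_right h, ENNReal.ofReal_eq_zero.2 h, ENNReal.ofReal_zero]
  · rw [max_eq_left h]

lemma max_sub_max_neg (a : ℝ) : max a 0 - max (-a) 0 = a := by
  rcases le_total a 0 with h | h
  · rw [max_eq_right h, max_eq_left (by linarith)]; ring
  · rw [max_eq_left h, max_eq_right (by linarith)]; ring

-- inserted inside namespace UUE
def IsPSHOn' {n : ℕ} (Ω : Set (Fin n → ℂ)) (u : (Fin n → ℂ) → EReal) : Prop :=
  UpperSemicontinuousOn u Ω ∧
  ∀ a ∈ Ω, ∀ b : Fin n → ℂ, ∀ r : ℝ, 0 < r →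
    (∀ l : ℂ, ‖l‖ ≤ r → a + l • b ∈ Ω) →
    u a ≤ (((2 * Real.pi)⁻¹ : ℝ) : EReal) *
      (((∫⁻ θ in Set.Ioc (0:ℝ) (2*Real.pi),
          erealToENNReal (u (a + (((r : ℂ) * Complex.exp (θ * Complex.I)) • b))) : ℝ≥0∞) : EReal)
        - ((∫⁻ θ in Set.Ioc (0:ℝ) (2*Real.pi),
          erealToENNReal (-(u (a + (((r : ℂ) * Complex.exp (θ * Complex.I)) • b)))) : ℝ≥0∞) : EReal))

lemma circle_bound {n : ℕ} {Ω : Set (Fin n → ℂ)} (hΩ : IsOpen Ω)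
    {φ : (Fin n → ℂ) → ℝ} (hφc : ContinuousOn φ Ω)
    {f : (Fin n → ℂ) → ℝ} (hf0 : ∀ z, 0 ≤ f z) (hfm : Measurable (Ω.indicator f))
    {ε : ℝ}
    (hpsh : IsPSHOn' Ω (fun z => elog (f z) + ((ε * φ z : ℝ) : EReal)))
    {a : Fin n → ℂ} (ha : a ∈ Ω) (b : Fin n → ℂ) {ρ : ℝ} (hρ : 0 < ρ)
    (hmem : ∀ l : ℂ, ‖l‖ ≤ ρ → a + l • b ∈ Ω) :
    ENNReal.ofReal (2 * Real.pi) * ENNReal.ofReal (f a * Real.exp (ε * φ a)) ≤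
      ∫⁻ θ in Set.Ioc (0:ℝ) (2*Real.pi),
        ENNReal.ofReal (f (a + (((ρ:ℂ) * Complex.exp (θ * Complex.I)) • b)) *
          Real.exp (ε * φ (a + (((ρ:ℂ) * Complex.exp (θ * Complex.I)) • b)))) := by
  classical
  set γ : ℝ → (Fin n → ℂ) := fun θ => a + (((ρ:ℂ) * Complex.exp (θ * Complex.I)) • b) with hγ
  have hγΩ : ∀ θ : ℝ, γ θ ∈ Ω := by
    intro θ
    apply hmem
    rw [norm_mul, Complex.norm_real, Complex.norm_exp_ofReal_mul_I, Real.norm_eq_abs, abs_of_pos hρ, mul_one]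
  have hγcont : Continuous γ := by
    apply continuous_const.add
    refine Continuous.smul (f := fun θ : ℝ => (ρ:ℂ) * Complex.exp (θ * Complex.I)) (g := fun _ : ℝ => b) ?_ continuous_const
    exact continuous_const.mul (Complex.continuous_exp.comp
      ((Complex.continuous_ofReal).mul continuous_const))
  set p : ℝ → ℝ := fun θ => f (γ θ) with hpdef
  set q : ℝ → ℝ := fun θ => ε * φ (γ θ) with hqdef
  have hp : Measurable p := by
    have : p = fun θ => Ω.indicator f (γ θ) := by
      funext θ; rw [Set.indicator_of_mem (hγΩ θ)]
    rw [this]; exact hfm.comp hγcont.measurable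
  have hq : Continuous q :=
    continuous_const.mul (hφc.comp_continuous hγcont hγΩ)
  have hp0 : ∀ θ, 0 ≤ p θ := fun θ => hf0 _
  -- trivial case f a = 0
  by_cases hfa : f a ≤ 0
  · have : f a = 0 := le_antisymm hfa (hf0 a)
    rw [this, zero_mul, ENNReal.ofReal_zero, mul_zero]
    exact zero_le
  push_neg at hfa
  set c : ℝ := Real.log (f a) + ε * φ a with hc
  set Eh : ℝ → ℝ≥0∞ := fun θ => if p θ ≤ 0 then 0 else ENNReal.ofReal (Real.log (p θ) + q θ)
    with hEhdef
  set Enh : ℝ → ℝ≥0∞ := fun θ => if p θ ≤ 0 then ⊤ else ENNReal.ofReal (-(Real.log (p θ) + q θ))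
    with hEnhdef
  set G : ℝ → ℝ≥0∞ := fun θ => ENNReal.ofReal (p θ * Real.exp (q θ)) with hGdef
  have hmeasEh : Measurable Eh := by
    apply Measurable.ite (measurableSet_le hp measurable_const) measurable_const
    exact ENNReal.measurable_ofReal.comp ((Real.measurable_log.comp hp).add hq.measurable)
  have hmeasEnh : Measurable Enh := by
    apply Measurable.ite (measurableSet_le hp measurable_const) measurable_const
    exact ENNReal.measurable_ofReal.comp ((Real.measurable_log.comp hp).add hq.measurable).neg
  have hmeasG : Measurable G :=
    ENNReal.measurable_ofReal.comp (hp.mul ((Real.continuous_exp.comp hq).measurable))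
  have hEh : ∀ θ : ℝ, erealToENNReal (elog (f (γ θ)) + ((ε * φ (γ θ) : ℝ) : EReal)) = Eh θ := by
    intro θ
    by_cases h : p θ ≤ 0
    · have hp' : f (γ θ) ≤ 0 := h
      simp only [elog, if_pos hp', EReal.bot_add, hEhdef, if_pos h, erealToENNReal]
      simp
    · have hp' : ¬ f (γ θ) ≤ 0 := h
      simp only [elog, if_neg hp', hEhdef, if_neg h, ← EReal.coe_add]
      rw [erealToENNReal, if_neg (EReal.coe_ne_top _), EReal.toReal_coe]
  have hEnh : ∀ θ : ℝ, erealToENNReal (-(elog (f (γ θ)) + ((ε * φ (γ θ) : ℝ) : EReal))) = Enh θ := by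
    intro θ
    by_cases h : p θ ≤ 0
    · have hp' : f (γ θ) ≤ 0 := h
      simp only [elog, if_pos hp', EReal.bot_add, hEnhdef, if_pos h, erealToENNReal]
      simp
    · have hp' : ¬ f (γ θ) ≤ 0 := h
      simp only [elog, if_neg hp', hEnhdef, if_neg h, ← EReal.coe_add, ← EReal.coe_neg]
      rw [erealToENNReal, if_neg (EReal.coe_ne_top _), EReal.toReal_coe]
  set S : ℝ≥0∞ := ∫⁻ θ in Set.Ioc (0:ℝ) (2*Real.pi), Eh θ with hSdef
  set T : ℝ≥0∞ := ∫⁻ θ in Set.Ioc (0:ℝ) (2*Real.pi), Enh θ with hTdef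
  have hkey : ((c : ℝ) : EReal) ≤ (((2 * Real.pi)⁻¹ : ℝ) : EReal) * ((S : EReal) - (T : EReal)) := by
    have h0 : elog (f a) + ((ε * φ a : ℝ) : EReal) ≤ (((2 * Real.pi)⁻¹ : ℝ) : EReal) *
        (((∫⁻ θ in Set.Ioc (0:ℝ) (2*Real.pi),
            erealToENNReal (elog (f (γ θ)) + ((ε * φ (γ θ) : ℝ) : EReal)) : ℝ≥0∞) : EReal)
          - ((∫⁻ θ in Set.Ioc (0:ℝ) (2*Real.pi),
            erealToENNReal (-(elog (f (γ θ)) + ((ε * φ (γ θ) : ℝ) : EReal))) : ℝ≥0∞) : EReal)) :=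
      hpsh.2 a ha b ρ hρ hmem
    rw [show (∫⁻ θ in Set.Ioc (0:ℝ) (2*Real.pi),
        erealToENNReal (elog (f (γ θ)) + ((ε * φ (γ θ) : ℝ) : EReal))) = S from
      lintegral_congr fun θ => hEh θ] at h0
    rw [show (∫⁻ θ in Set.Ioc (0:ℝ) (2*Real.pi),
        erealToENNReal (-(elog (f (γ θ)) + ((ε * φ (γ θ) : ℝ) : EReal)))) = T from
      lintegral_congr fun θ => hEnh θ] at h0
    rw [show elog (f a) = ((Real.log (f a) : ℝ) : EReal) from if_neg (not_le.2 hfa),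
      ← EReal.coe_add] at h0
    exact h0
  -- goal rewrite
  have hfc : f a * Real.exp (ε * φ a) = Real.exp c := by
    rw [hc, Real.exp_add, Real.exp_log hfa]
  rw [hfc]
  have hGoal : (∫⁻ θ in Set.Ioc (0:ℝ) (2*Real.pi),
      ENNReal.ofReal (f (γ θ) * Real.exp (ε * φ (γ θ)))) =
      ∫⁻ θ in Set.Ioc (0:ℝ) (2*Real.pi), G θ := rfl
  rw [hGoal]
  by_cases hS' : S = ⊤
  · have hle : ∀ θ, Eh θ ≤ G θ := by
      intro θ
      by_cases h : p θ ≤ 0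
      · simp [hEhdef, h]
      · push_neg at h
        simp only [hEhdef, if_neg (not_le.2 h), hGdef]
        have : p θ * Real.exp (q θ) = Real.exp (Real.log (p θ) + q θ) := by
          rw [Real.exp_add, Real.exp_log h]
        rw [this]
        apply ENNReal.ofReal_le_ofReal
        have := Real.add_one_le_exp (Real.log (p θ) + q θ)
        linarith
    have hmono : S ≤ ∫⁻ θ in Set.Ioc (0:ℝ) (2*Real.pi), G θ := lintegral_mono hle
    rw [hS'] at hmono
    rw [top_unique hmono]
    exact le_top
  · -- finite case
    have hT' : T ≠ ⊤ := by
      intro hT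
      rw [hT] at hkey
      rw [show ((⊤ : ℝ≥0∞) : EReal) = (⊤ : EReal) from rfl, EReal.sub_top] at hkey
      rw [EReal.coe_mul_bot_of_pos (by positivity)] at hkey
      exact (EReal.coe_ne_bot c) (le_bot_iff.mp hkey)
    have hreal : 2 * Real.pi * c ≤ S.toReal - T.toReal := by
      rw [coe_ennreal_eq S hS', coe_ennreal_eq T hT', ← EReal.coe_sub, ← EReal.coe_mul,
        EReal.coe_le_coe_iff] at hkey
      have hπ : (0:ℝ) < 2 * Real.pi := by positivity
      calc 2 * Real.pi * c ≤ 2 * Real.pi * ((2 * Real.pi)⁻¹ * (S.toReal - T.toReal)) := by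
            exact mul_le_mul_of_nonneg_left hkey hπ.le
        _ = S.toReal - T.toReal := by field_simp
    -- pointwise tangent line inequality
    have hpt : ∀ θ : ℝ,
        ENNReal.ofReal (Real.exp c) + ENNReal.ofReal (Real.exp c) * Eh θ
          + ENNReal.ofReal (Real.exp c * max (-c) 0) ≤
        G θ + ENNReal.ofReal (Real.exp c) * Enh θ + ENNReal.ofReal (Real.exp c * max c 0) := by
      intro θ
      by_cases h : p θ ≤ 0
      · simp only [hEnhdef, if_pos h]
        rw [ENNReal.mul_top (by simp [Real.exp_pos c])]
        simp
      · push_neg at h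
        simp only [hEhdef, hEnhdef, hGdef, if_neg (not_le.2 h)]
        set t : ℝ := Real.log (p θ) + q θ with ht
        have hGt : p θ * Real.exp (q θ) = Real.exp t := by
          rw [ht, Real.exp_add, Real.exp_log h]
        rw [hGt, ofReal_max t, ofReal_max (-t)]
        rw [← ENNReal.ofReal_mul (Real.exp_pos c).le, ← ENNReal.ofReal_mul (Real.exp_pos c).le]
        have n1 : 0 ≤ Real.exp c * max t 0 := mul_nonneg (Real.exp_pos c).le (le_max_right t 0)
        have n2 : 0 ≤ Real.exp c * max (-c) 0 :=
          mul_nonneg (Real.exp_pos c).le (le_max_right (-c) 0)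
        have n3 : 0 ≤ Real.exp c * max (-t) 0 :=
          mul_nonneg (Real.exp_pos c).le (le_max_right (-t) 0)
        have n4 : 0 ≤ Real.exp c * max c 0 := mul_nonneg (Real.exp_pos c).le (le_max_right c 0)
        rw [← ENNReal.ofReal_add (Real.exp_pos c).le n1,
          ← ENNReal.ofReal_add (add_nonneg (Real.exp_pos c).le n1) n2,
          ← ENNReal.ofReal_add (Real.exp_pos t).le n3,
          ← ENNReal.ofReal_add (add_nonneg (Real.exp_pos t).le n3) n4]
        apply ENNReal.ofReal_le_ofReal
        have h1 : Real.exp c * (1 + (t - c)) ≤ Real.exp t := by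
          have h2 := Real.add_one_le_exp (t - c)
          calc Real.exp c * (1 + (t - c)) ≤ Real.exp c * Real.exp (t - c) := by
                apply mul_le_mul_of_nonneg_left (by linarith) (Real.exp_pos c).le
            _ = Real.exp t := by rw [← Real.exp_add]; congr 1; ring
        have h2 := max_sub_max_neg t
        have h3 := max_sub_max_neg c
        have h4 : Real.exp c * (1 + (t - c)) = Real.exp c + Real.exp c * (max t 0)
            - Real.exp c * (max (-t) 0) - Real.exp c * (max c 0)
            + Real.exp c * (max (-c) 0) := by
          linear_combination (Real.exp c) * h3 - (Real.exp c) * h2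
        linarith [h1, h4]
    have hInt := lintegral_mono (μ := volume.restrict (Set.Ioc (0:ℝ) (2*Real.pi))) hpt
    have hμI : (volume.restrict (Set.Ioc (0:ℝ) (2*Real.pi))) Set.univ = ENNReal.ofReal (2*Real.pi) := by
      rw [Measure.restrict_apply MeasurableSet.univ, Set.univ_inter, Real.volume_Ioc]
      norm_num
    have e1 : (∫⁻ θ in Set.Ioc (0:ℝ) (2*Real.pi),
        (ENNReal.ofReal (Real.exp c) + ENNReal.ofReal (Real.exp c) * Eh θ
          + ENNReal.ofReal (Real.exp c * max (-c) 0))) =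
        ENNReal.ofReal (Real.exp c) * ENNReal.ofReal (2*Real.pi)
          + (ENNReal.ofReal (Real.exp c) * S
          + ENNReal.ofReal (Real.exp c * max (-c) 0) * ENNReal.ofReal (2*Real.pi)) := by
      rw [lintegral_add_right _ measurable_const, lintegral_add_left measurable_const,
        lintegral_const_mul' _ _ ENNReal.ofReal_ne_top, lintegral_const, lintegral_const,
        hμI, add_assoc]
    have e2 : (∫⁻ θ in Set.Ioc (0:ℝ) (2*Real.pi),
        (G θ + ENNReal.ofReal (Real.exp c) * Enh θ
          + ENNReal.ofReal (Real.exp c * max c 0))) =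
        (∫⁻ θ in Set.Ioc (0:ℝ) (2*Real.pi), G θ)
          + (ENNReal.ofReal (Real.exp c) * T
          + ENNReal.ofReal (Real.exp c * max c 0) * ENNReal.ofReal (2*Real.pi)) := by
      rw [lintegral_add_right _ measurable_const,
        lintegral_add_right _ (hmeasEnh.const_mul _),
        lintegral_const_mul' _ _ ENNReal.ofReal_ne_top, lintegral_const, hμI, add_assoc]
    rw [e1, e2] at hInt
    set X : ℝ≥0∞ := ENNReal.ofReal (Real.exp c) * T
      + ENNReal.ofReal (Real.exp c * max c 0) * ENNReal.ofReal (2*Real.pi) with hXdef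
    have hX : X ≠ ⊤ := by
      apply ENNReal.add_ne_top.2
      constructor
      · exact ENNReal.mul_ne_top ENNReal.ofReal_ne_top hT'
      · exact ENNReal.mul_ne_top ENNReal.ofReal_ne_top ENNReal.ofReal_ne_top
    have hXle : X ≤ ENNReal.ofReal (Real.exp c) * S
        + ENNReal.ofReal (Real.exp c * max (-c) 0) * ENNReal.ofReal (2*Real.pi) := by
      rw [hXdef, ← ENNReal.ofReal_toReal hS', ← ENNReal.ofReal_toReal hT',
        ← ENNReal.ofReal_mul (Real.exp_pos c).le, ← ENNReal.ofReal_mul (Real.exp_pos c).le,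
        ← ENNReal.ofReal_mul (by positivity), ← ENNReal.ofReal_mul (by positivity),
        ← ENNReal.ofReal_add (by positivity) (by positivity),
        ← ENNReal.ofReal_add (by positivity) (by positivity)]
      apply ENNReal.ofReal_le_ofReal
      have h3 := max_sub_max_neg c
      have h5 := mul_le_mul_of_nonneg_left hreal (Real.exp_pos c).le
      have h6 : Real.exp c * (2 * Real.pi * c) = Real.exp c * (max c 0) * (2*Real.pi)
          - Real.exp c * (max (-c) 0) * (2*Real.pi) := by
        linear_combination (-(2 * Real.pi * Real.exp c)) * h3
      linarith [h5, h6]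
    have hfinal : ENNReal.ofReal (Real.exp c) * ENNReal.ofReal (2*Real.pi) + X ≤
        (∫⁻ θ in Set.Ioc (0:ℝ) (2*Real.pi), G θ) + X := by
      calc ENNReal.ofReal (Real.exp c) * ENNReal.ofReal (2*Real.pi) + X
          ≤ ENNReal.ofReal (Real.exp c) * ENNReal.ofReal (2*Real.pi)
            + (ENNReal.ofReal (Real.exp c) * S
            + ENNReal.ofReal (Real.exp c * max (-c) 0) * ENNReal.ofReal (2*Real.pi)) :=
            add_le_add_right hXle _
        _ ≤ _ := hInt
    have := (ENNReal.add_le_add_iff_right hX).mp hfinal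
    rw [mul_comm] at this
    exact this
open Real in
lemma polar_setLIntegral (Fc : ℂ → ℝ≥0∞) (hFc : Measurable Fc) (w : ℂ) {r : ℝ} (hr : 0 < r) :
    ∫⁻ p in (Set.Ioo (0:ℝ) r) ×ˢ (Set.Ioc (0:ℝ) (2*Real.pi)),
        ENNReal.ofReal p.1 * Fc (w + (p.1 : ℂ) * Complex.exp ((p.2 : ℂ) * Complex.I)) ≤
      ∫⁻ z in Metric.ball w r, Fc z := by
  classical
  set S : Set (ℝ × ℝ) := (Set.Ioo (0:ℝ) r) ×ˢ (Set.Ioc (0:ℝ) (2*Real.pi)) with hSdef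
  have hS : MeasurableSet S := measurableSet_Ioo.prod measurableSet_Ioc
  set Φ : ℝ × ℝ → ℂ := fun p => w + (p.1 : ℂ) * Complex.exp ((p.2 : ℂ) * Complex.I) with hΦdef
  set c : ℝ × ℝ := (w.re, w.im) with hcdef
  set Ψ : ℝ × ℝ → ℝ × ℝ := fun p => c + polarCoord.symm p with hΨdef
  set B : ℝ × ℝ → ℝ × ℝ →L[ℝ] ℝ × ℝ := fun p =>
    LinearMap.toContinuousLinearMap (Matrix.toLin (Module.Basis.finTwoProd ℝ) (Module.Basis.finTwoProd ℝ)
      !![cos p.2, -p.1 * sin p.2; sin p.2, p.1 * cos p.2]) with hBdef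
  have B_det : ∀ p, (B p).det = p.1 := by
    intro p
    conv_rhs => rw [← one_mul p.1, ← cos_sq_add_sin_sq p.2]
    simp only [hBdef, neg_mul, LinearMap.det_toContinuousLinearMap, LinearMap.det_toLin,
      Matrix.det_fin_two_of, sub_neg_eq_add]
    ring
  have hderiv : ∀ p ∈ S, HasFDerivWithinAt Ψ (B p) S p := by
    intro p _
    exact ((hasFDerivAt_polarCoord_symm p).const_add c).hasFDerivWithinAt
  have hΨΦ : ∀ p, Complex.measurableEquivRealProd (Φ p) = Ψ p := by
    intro p
    show Complex.measurableEquivRealProd (Φ p) = c + polarCoord.symm p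
    rw [polarCoord_symm_apply]
    have : Complex.measurableEquivRealProd (Φ p) = ((Φ p).re, (Φ p).im) := rfl
    rw [this]
    have hre : (Φ p).re = w.re + p.1 * cos p.2 := by
      simp [hΦdef, Complex.exp_mul_I, Complex.add_re, Complex.mul_re, Complex.cos_ofReal_re,
        Complex.sin_ofReal_re]
    have him : (Φ p).im = w.im + p.1 * sin p.2 := by
      simp [hΦdef, Complex.exp_mul_I, Complex.add_im, Complex.mul_im, Complex.cos_ofReal_re,
        Complex.sin_ofReal_re]
    rw [hre, him]
    rfl
  have hΦinj : Set.InjOn Φ S := by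
    rintro ⟨ρ₁, θ₁⟩ ⟨h1ρ, h1θ⟩ ⟨ρ₂, θ₂⟩ ⟨h2ρ, h2θ⟩ heq
    simp only [hΦdef] at heq
    have heq' : (ρ₁:ℂ) * Complex.exp ((θ₁:ℂ) * Complex.I)
        = (ρ₂:ℂ) * Complex.exp ((θ₂:ℂ) * Complex.I) := by
      have := heq
      field_simp at this ⊢
      linear_combination this
    have habs : ρ₁ = ρ₂ := by
      have h := congrArg (‖·‖) heq'
      simpa [norm_mul, Complex.norm_real, Complex.norm_exp_ofReal_mul_I,
        abs_of_pos h1ρ.1, abs_of_pos h2ρ.1] using h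
    subst habs
    have hexp : Complex.exp ((θ₁:ℂ) * Complex.I) = Complex.exp ((θ₂:ℂ) * Complex.I) := by
      have hρne : (ρ₁:ℂ) ≠ 0 := by
        simp [Complex.ofReal_eq_zero]; exact h1ρ.1.ne'
      exact mul_left_cancel₀ hρne heq'
    obtain ⟨k, hk⟩ := Complex.exp_eq_exp_iff_exists_int.mp hexp
    have hkreal : θ₁ = θ₂ + k * (2 * Real.pi) := by
      have := congrArg Complex.im hk
      simpa [Complex.add_im, Complex.mul_im, Complex.mul_re] using this
    have hkz : (k : ℝ) = 0 := by
      by_contra hne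
      have h1 : (1:ℝ) ≤ |(k:ℝ)| := by
        have : k ≠ 0 := by exact_mod_cast hne
        exact_mod_cast Int.one_le_abs this
      have hπ := Real.pi_pos
      have : |θ₁ - θ₂| < 2 * Real.pi := by
        rw [abs_lt]
        constructor <;> nlinarith [h1θ.1, h1θ.2, h2θ.1, h2θ.2]
      rw [hkreal] at this
      have : |(k:ℝ) * (2*Real.pi)| < 2 * Real.pi := by simpa using this
      rw [abs_mul, abs_of_pos (by positivity : (0:ℝ) < 2*Real.pi)] at this
      nlinarith
    have : θ₁ = θ₂ := by rw [hkreal, hkz]; ring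
    simp [this]
  have hΨinj : Set.InjOn Ψ S := by
    intro p hp p' hp' h
    apply hΦinj hp hp'
    have := hΨΦ p
    have h2 := hΨΦ p'
    apply Complex.measurableEquivRealProd.injective
    rw [hΨΦ p, hΨΦ p', h]
  -- image is inside the ball
  have himg : Φ '' S ⊆ Metric.ball w r := by
    rintro z ⟨⟨ρ, θ⟩, ⟨hρ, hθ⟩, rfl⟩
    rw [Metric.mem_ball, Complex.dist_eq]
    simp only [hΦdef, add_sub_cancel_left]
    rw [norm_mul, Complex.norm_real, Complex.norm_exp_ofReal_mul_I, Real.norm_eq_abs, abs_of_pos hρ.1, mul_one]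
    exact hρ.2
  -- change of variables on ℝ²
  have hCoV : ∫⁻ q in Ψ '' S, Fc (Complex.measurableEquivRealProd.symm q) =
      ∫⁻ p in S, ENNReal.ofReal |(B p).det| *
        Fc (Complex.measurableEquivRealProd.symm (Ψ p)) :=
    lintegral_image_eq_lintegral_abs_det_fderiv_mul volume hS hderiv hΨinj _
  -- transfer from ℂ to ℝ²
  have htrans : ∫⁻ z in Φ '' S, Fc z =
      ∫⁻ q in Ψ '' S, Fc (Complex.measurableEquivRealProd.symm q) := by
    have h1 := Complex.volume_preserving_equiv_real_prod.setLIntegral_comp_emb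
      Complex.measurableEquivRealProd.measurableEmbedding
      (fun q => Fc (Complex.measurableEquivRealProd.symm q)) (Φ '' S)
    have himg2 : Complex.measurableEquivRealProd '' (Φ '' S) = Ψ '' S := by
      rw [← Set.image_comp]
      apply Set.image_congr
      intro p _
      exact hΨΦ p
    rw [himg2] at h1
    rw [← h1]
    apply lintegral_congr
    intro z
    rw [MeasurableEquiv.symm_apply_apply]
  calc ∫⁻ p in S, ENNReal.ofReal p.1 * Fc (Φ p)
      = ∫⁻ p in S, ENNReal.ofReal |(B p).det| *
          Fc (Complex.measurableEquivRealProd.symm (Ψ p)) := by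
        apply setLIntegral_congr_fun hS
        intro p hp
        beta_reduce
        rw [B_det, abs_of_pos hp.1.1]
        congr 1
        rw [← hΨΦ p, MeasurableEquiv.symm_apply_apply]
    _ = ∫⁻ q in Ψ '' S, Fc (Complex.measurableEquivRealProd.symm q) := hCoV.symm
    _ = ∫⁻ z in Φ '' S, Fc z := htrans.symm
    _ ≤ ∫⁻ z in Metric.ball w r, Fc z := lintegral_mono_set himg
def CP (n : ℕ) : Set (Fin n → ℂ) := {z | ∀ j, ‖z j‖ ≤ 1}

lemma CP_closed (n : ℕ) : IsClosed (CP n) := by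
  have : CP n = ⋂ j, (fun z : Fin n → ℂ => ‖z j‖) ⁻¹' (Set.Iic 1) := by
    ext z; simp [CP]
  rw [this]
  exact isClosed_iInter fun j =>
    IsClosed.preimage (continuous_norm.comp (continuous_apply j)) isClosed_Iic

def Fden {n : ℕ} (φ f : (Fin n → ℂ) → ℝ) (ε : ℝ) (z : Fin n → ℂ) : ℝ≥0∞ :=
  (CP n).indicator (fun z => ENNReal.ofReal (f z * Real.exp (ε * φ z))) z

lemma Fden_measurable {n : ℕ} {Ω : Set (Fin n → ℂ)} (hΩ' : CP n ⊆ Ω)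
    {φ f : (Fin n → ℂ) → ℝ} (hfm : Measurable (Ω.indicator f))
    (hφm : Measurable (Ω.indicator φ)) (ε : ℝ) :
    Measurable (Fden φ f ε) := by
  have h : Fden φ f ε = Set.indicator (CP n)
      (fun z => ENNReal.ofReal (Ω.indicator f z * Real.exp (ε * Ω.indicator φ z))) := by
    funext z
    by_cases hz : z ∈ CP n
    · rw [Fden, Set.indicator_of_mem hz, Set.indicator_of_mem hz,
        Set.indicator_of_mem (hΩ' hz), Set.indicator_of_mem (hΩ' hz)]
    · rw [Fden, Set.indicator_of_notMem hz, Set.indicator_of_notMem hz]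
  rw [h]
  apply Measurable.indicator _ (CP_closed n).measurableSet
  apply ENNReal.measurable_ofReal.comp
  exact hfm.mul (Real.continuous_exp.measurable.comp (hφm.const_mul ε))

lemma Fden_ne_top {n : ℕ} (φ f : (Fin n → ℂ) → ℝ) (ε : ℝ) (z : Fin n → ℂ) :
    Fden φ f ε z ≠ ⊤ := by
  rw [Fden]
  by_cases hz : z ∈ CP n
  · rw [Set.indicator_of_mem hz]; simp
  · rw [Set.indicator_of_notMem hz]; simp

lemma Fden_of_mem {n : ℕ} {φ f : (Fin n → ℂ) → ℝ} {ε : ℝ} {z : Fin n → ℂ} (hz : z ∈ CP n) :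
    Fden φ f ε z = ENNReal.ofReal (f z * Real.exp (ε * φ z)) := by
  rw [Fden, Set.indicator_of_mem hz]

lemma disk_bound {n : ℕ} {Ω : Set (Fin n → ℂ)} (hΩ : IsOpen Ω) (hΩ' : CP n ⊆ Ω)
    {φ : (Fin n → ℂ) → ℝ} (hφc : ContinuousOn φ Ω) (hφm : Measurable (Ω.indicator φ))
    {f : (Fin n → ℂ) → ℝ} (hf0 : ∀ z, 0 ≤ f z) (hfm : Measurable (Ω.indicator f))
    {ε : ℝ}
    (hpsh : IsPSHOn' Ω (fun z => elog (f z) + ((ε * φ z : ℝ) : EReal)))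
    {r : ℝ} (hr : 0 < r)
    {z : Fin n → ℂ} (i : Fin n) (hzi : ‖z i‖ ≤ 1 - r) :
    ENNReal.ofReal (Real.pi * r^2) * Fden φ f ε z ≤
      ∫⁻ l in Metric.ball (z i) r, Fden φ f ε (Function.update z i l) := by
  classical
  by_cases hFz : Fden φ f ε z = 0
  · rw [hFz, mul_zero]; exact zero_le
  have hzCP : z ∈ CP n := by
    by_contra h
    exact hFz (by rw [Fden, Set.indicator_of_notMem h])
  have hzΩ : z ∈ Ω := hΩ' hzCP
  set Fc : ℂ → ℝ≥0∞ := fun l => Fden φ f ε (Function.update z i l) with hFcdef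
  have hFcm : Measurable Fc :=
    (Fden_measurable hΩ' hfm hφm ε).comp (measurable_update z)
  -- the circle bound at each radius ρ ∈ (0, r)
  have hcirc : ∀ ρ : ℝ, ρ ∈ Set.Ioo (0:ℝ) r →
      ENNReal.ofReal (2 * Real.pi) * Fden φ f ε z ≤
        ∫⁻ θ in Set.Ioc (0:ℝ) (2*Real.pi),
          Fc ((z i) + (ρ:ℂ) * Complex.exp ((θ:ℂ) * Complex.I)) := by
    intro ρ hρ
    have hmem : ∀ l : ℂ, ‖l‖ ≤ ρ → z + l • (Pi.single i 1 : Fin n → ℂ) ∈ Ω := by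
      intro l hl
      rw [add_smul_single]
      apply hΩ'
      intro j
      by_cases hj : j = i
      · subst hj
        rw [Function.update_self]
        calc ‖z j + l‖ ≤ ‖z j‖ + ‖l‖ := norm_add_le _ _
          _ ≤ (1 - r) + ρ := add_le_add hzi hl
          _ ≤ 1 := by linarith [hρ.2]
      · rw [Function.update_of_ne hj]
        exact hzCP j
    have hupdCP : ∀ l : ℂ, ‖l‖ ≤ ρ → Function.update z i (z i + l) ∈ CP n := by
      intro l hl
      rw [← add_smul_single]
      intro j
      by_cases hj : j = i
      · subst hj
        rw [add_smul_single, Function.update_self]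
        calc ‖z j + l‖ ≤ ‖z j‖ + ‖l‖ := norm_add_le _ _
          _ ≤ (1 - r) + ρ := add_le_add hzi hl
          _ ≤ 1 := by linarith [hρ.2]
      · rw [add_smul_single, Function.update_of_ne hj]
        exact hzCP j
    have hcb := circle_bound hΩ hφc hf0 hfm hpsh hzΩ (Pi.single i 1) hρ.1 hmem
    have habs : ∀ θ : ℝ, ‖(ρ:ℂ) * Complex.exp ((θ:ℂ) * Complex.I)‖ ≤ ρ := by
      intro θ
      rw [norm_mul, Complex.norm_real, Complex.norm_exp_ofReal_mul_I, Real.norm_eq_abs, abs_of_pos hρ.1, mul_one]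
    calc ENNReal.ofReal (2 * Real.pi) * Fden φ f ε z
        = ENNReal.ofReal (2 * Real.pi) * ENNReal.ofReal (f z * Real.exp (ε * φ z)) := by
          rw [Fden_of_mem hzCP]
      _ ≤ ∫⁻ θ in Set.Ioc (0:ℝ) (2*Real.pi),
            ENNReal.ofReal (f (z + (((ρ:ℂ) * Complex.exp ((θ:ℂ) * Complex.I)) • (Pi.single i 1 : Fin n → ℂ))) *
              Real.exp (ε * φ (z + (((ρ:ℂ) * Complex.exp ((θ:ℂ) * Complex.I)) • (Pi.single i 1 : Fin n → ℂ))))) := hcb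
      _ = ∫⁻ θ in Set.Ioc (0:ℝ) (2*Real.pi),
            Fc ((z i) + (ρ:ℂ) * Complex.exp ((θ:ℂ) * Complex.I)) := by
          apply lintegral_congr
          intro θ
          rw [hFcdef]
          simp only
          rw [Fden_of_mem (hupdCP _ (habs θ)), ← add_smul_single]
  -- Tonelli: iterated integral equals product-set integral
  set g : ℝ × ℝ → ℝ≥0∞ := fun p =>
    ENNReal.ofReal p.1 * Fc ((z i) + (p.1:ℂ) * Complex.exp ((p.2:ℂ) * Complex.I)) with hgdef
  have hgm : Measurable g := by
    apply Measurable.mul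
    · exact ENNReal.measurable_ofReal.comp measurable_fst
    · apply hFcm.comp
      apply Measurable.add measurable_const
      apply Measurable.mul (Complex.measurable_ofReal.comp measurable_fst)
      exact (Complex.continuous_exp.measurable).comp
        ((Complex.measurable_ofReal.comp measurable_snd).mul measurable_const)
  have hTon : ∫⁻ p in (Set.Ioo (0:ℝ) r) ×ˢ (Set.Ioc (0:ℝ) (2*Real.pi)), g p =
      ∫⁻ ρ in Set.Ioo (0:ℝ) r, ∫⁻ θ in Set.Ioc (0:ℝ) (2*Real.pi), g (ρ, θ) := by
    have hrw : (volume : Measure (ℝ × ℝ)).restrict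
        ((Set.Ioo (0:ℝ) r) ×ˢ (Set.Ioc (0:ℝ) (2*Real.pi))) =
        ((volume : Measure ℝ).restrict (Set.Ioo (0:ℝ) r)).prod
          ((volume : Measure ℝ).restrict (Set.Ioc (0:ℝ) (2*Real.pi))) := by
      rw [show (volume : Measure (ℝ × ℝ)) = (volume : Measure ℝ).prod volume from
        Measure.volume_eq_prod ℝ ℝ, ← Measure.prod_restrict]
    rw [hrw, lintegral_prod g hgm.aemeasurable]
  have hrad : ∫⁻ ρ in Set.Ioo (0:ℝ) r, ENNReal.ofReal ρ = ENNReal.ofReal (r^2/2) := by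
    rw [Measure.restrict_congr_set Ioo_ae_eq_Ioc]
    rw [← ofReal_integral_eq_lintegral_ofReal]
    · congr 1
      rw [← intervalIntegral.integral_of_le hr.le, integral_id]
      norm_num
    · exact continuous_id.integrableOn_Ioc
    · filter_upwards [ae_restrict_mem measurableSet_Ioc] with ρ hρ
      exact hρ.1.le
  have hin : ∀ ρ : ℝ, ∫⁻ θ in Set.Ioc (0:ℝ) (2*Real.pi), g (ρ, θ) =
      ENNReal.ofReal ρ * ∫⁻ θ in Set.Ioc (0:ℝ) (2*Real.pi),
        Fc ((z i) + (ρ:ℂ) * Complex.exp ((θ:ℂ) * Complex.I)) := by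
    intro ρ
    rw [← lintegral_const_mul' _ _ ENNReal.ofReal_ne_top]
  have hmeas_inner : Measurable fun ρ : ℝ => ∫⁻ θ in Set.Ioc (0:ℝ) (2*Real.pi), g (ρ, θ) := by
    apply Measurable.lintegral_prod_right (f := fun ρ θ => g (ρ, θ))
    exact hgm
  calc ENNReal.ofReal (Real.pi * r^2) * Fden φ f ε z
      = ENNReal.ofReal (r^2/2) * (ENNReal.ofReal (2*Real.pi) * Fden φ f ε z) := by
        rw [← mul_assoc, ← ENNReal.ofReal_mul (by positivity)]
        congr 2
        ring
    _ = (∫⁻ ρ in Set.Ioo (0:ℝ) r, ENNReal.ofReal ρ) *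
          (ENNReal.ofReal (2*Real.pi) * Fden φ f ε z) := by rw [hrad]
    _ = ∫⁻ ρ in Set.Ioo (0:ℝ) r,
          ENNReal.ofReal ρ * (ENNReal.ofReal (2*Real.pi) * Fden φ f ε z) := by
        rw [lintegral_mul_const' _ _
          (ENNReal.mul_ne_top ENNReal.ofReal_ne_top (Fden_ne_top φ f ε z))]
    _ ≤ ∫⁻ ρ in Set.Ioo (0:ℝ) r, ∫⁻ θ in Set.Ioc (0:ℝ) (2*Real.pi), g (ρ, θ) := by
        apply setLIntegral_mono hmeas_inner
        intro ρ hρ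
        rw [hin ρ]
        exact mul_le_mul_right (hcirc ρ hρ) _
    _ = ∫⁻ p in (Set.Ioo (0:ℝ) r) ×ˢ (Set.Ioc (0:ℝ) (2*Real.pi)), g p := hTon.symm
    _ ≤ ∫⁻ l in Metric.ball (z i) r, Fc l := polar_setLIntegral Fc hFcm (z i) hr
lemma CP_compact (n : ℕ) : IsCompact (CP n) := by
  have h : CP n = Set.pi Set.univ (fun _ : Fin n => Metric.closedBall (0:ℂ) 1) := by
    ext z
    simp [CP, Set.mem_pi, Complex.dist_eq]
  rw [h]
  exact isCompact_univ_pi fun _ => isCompact_closedBall _ _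

lemma CP_nonempty (n : ℕ) : Set.Nonempty (CP n) :=
  ⟨0, fun j => by simp⟩

section SupBound

variable {n : ℕ} {Ω : Set (Fin n → ℂ)} (hΩ' : CP n ⊆ Ω)
  {φ : (Fin n → ℂ) → ℝ} (hφc : ContinuousOn φ Ω)

lemma bddAbove_exp (hΩ' : CP n ⊆ Ω) (hφc : ContinuousOn φ Ω) :
    BddAbove ((fun z => Real.exp (φ z)) '' CP n) :=
  (CP_compact n).bddAbove_image (Real.continuous_exp.comp_continuousOn (hφc.mono hΩ'))

lemma bddAbove_exp_neg (hΩ' : CP n ⊆ Ω) (hφc : ContinuousOn φ Ω) :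
    BddAbove ((fun z => Real.exp (-φ z)) '' CP n) :=
  (CP_compact n).bddAbove_image
    (Real.continuous_exp.comp_continuousOn (hφc.mono hΩ').neg)

lemma exp_eps_bound (hΩ' : CP n ⊆ Ω) (hφc : ContinuousOn φ Ω)
    {ε : ℝ} (hε : ε ∈ Set.Ioc (0:ℝ) 1)
    {x z : Fin n → ℂ} (hx : x ∈ CP n) (hz : z ∈ CP n) :
    Real.exp (ε * φ z) ≤
      (sSup ((fun z => Real.exp (φ z)) '' CP n) * sSup ((fun z => Real.exp (-φ z)) '' CP n))
        * Real.exp (ε * φ x) := by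
  set M := sSup ((fun z => Real.exp (φ z)) '' CP n) with hM
  set m := sSup ((fun z => Real.exp (-φ z)) '' CP n) with hm
  have hMz : Real.exp (φ z) ≤ M :=
    le_csSup (bddAbove_exp hΩ' hφc) (Set.mem_image_of_mem _ hz)
  have hMx : Real.exp (φ x) ≤ M :=
    le_csSup (bddAbove_exp hΩ' hφc) (Set.mem_image_of_mem _ hx)
  have hmx : Real.exp (-φ x) ≤ m :=
    le_csSup (bddAbove_exp_neg hΩ' hφc) (Set.mem_image_of_mem _ hx)
  have hMm1 : 1 ≤ M * m := by
    calc (1:ℝ) = Real.exp (φ x) * Real.exp (-φ x) := by rw [← Real.exp_add]; simp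
      _ ≤ M * m := mul_le_mul hMx hmx (Real.exp_pos _).le
          (le_trans (Real.exp_pos _).le hMx)
  set d : ℝ := φ z - φ x with hd
  have hkey : Real.exp (ε * d) ≤ M * m := by
    rcases le_or_gt d 0 with hdle | hdpos
    · calc Real.exp (ε * d) ≤ 1 := Real.exp_le_one_iff.2 (mul_nonpos_of_nonneg_of_nonpos hε.1.le hdle)
        _ ≤ M * m := hMm1
    · calc Real.exp (ε * d) ≤ Real.exp d := by
            apply Real.exp_le_exp.2
            nlinarith [hε.2, hε.1]
        _ = Real.exp (φ z) * Real.exp (-φ x) := by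
            rw [← Real.exp_add, show φ z + -φ x = d by rw [hd]; ring]
        _ ≤ M * m := mul_le_mul hMz hmx (Real.exp_pos _).le
            (le_trans (Real.exp_pos _).le hMz)
  calc Real.exp (ε * φ z) = Real.exp (ε * d) * Real.exp (ε * φ x) := by
        rw [← Real.exp_add]; congr 1; ring
    _ ≤ (M * m) * Real.exp (ε * φ x) :=
        mul_le_mul_of_nonneg_right hkey (Real.exp_pos _).le

end SupBound

lemma pointwise_bound {n : ℕ} {Ω : Set (Fin n → ℂ)} (hΩ : IsOpen Ω) (hΩ' : CP n ⊆ Ω)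
    {φ : (Fin n → ℂ) → ℝ} (hφc : ContinuousOn φ Ω) (hφm : Measurable (Ω.indicator φ))
    {f : (Fin n → ℂ) → ℝ} (hf0 : ∀ z, 0 ≤ f z) (hfm : Measurable (Ω.indicator f))
    {ε : ℝ} (hε : ε ∈ Set.Ioc (0:ℝ) 1)
    (hpsh : IsPSHOn' Ω (fun z => elog (f z) + ((ε * φ z : ℝ) : EReal)))
    (hint : (∫⁻ z in {z : Fin n → ℂ | ∀ i, ‖z i‖ < 1}, ENNReal.ofReal (f z)) ≤ 1)
    {r : ℝ} (hr : r ∈ Set.Ioo (0:ℝ) 1)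
    {x : Fin n → ℂ} (hx : ∀ i, ‖x i‖ ≤ 1 - r) :
    ENNReal.ofReal (f x) ≤ ENNReal.ofReal
      (((Real.pi * r ^ 2) ^ n)⁻¹ *
        sSup ((fun z => Real.exp (φ z)) '' CP n) *
        sSup ((fun z => Real.exp (-φ z)) '' CP n)) := by
  classical
  set M := sSup ((fun z => Real.exp (φ z)) '' CP n) with hMdef
  set m := sSup ((fun z => Real.exp (-φ z)) '' CP n) with hmdef
  have hxCP : x ∈ CP n := fun j => le_trans (hx j) (by linarith [hr.1])
  have hMpos : 0 < M :=
    lt_of_lt_of_le (Real.exp_pos (φ x)) (le_csSup (bddAbove_exp hΩ' hφc) (Set.mem_image_of_mem _ hxCP))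
  have hmpos : 0 < m :=
    lt_of_lt_of_le (Real.exp_pos (-φ x)) (le_csSup (bddAbove_exp_neg hΩ' hφc) (Set.mem_image_of_mem _ hxCP))
  set Fb : (Fin n → ℂ) → ℝ≥0∞ := fun z => Fden φ f ε z *
    ∏ j, (Metric.ball (x j) r).indicator (fun _ => (1:ℝ≥0∞)) (z j) with hFbdef
  have hFbm : Measurable Fb := by
    apply (Fden_measurable hΩ' hfm hφm ε).mul
    apply Finset.measurable_prod
    intro j _
    exact (measurable_const.indicator measurableSet_ball).comp (measurable_pi_apply j)
  have hprod_le_one : ∀ z : Fin n → ℂ,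
      (∏ j, (Metric.ball (x j) r).indicator (fun _ => (1:ℝ≥0∞)) (z j)) ≤ 1 := by
    intro z
    apply Finset.prod_le_one
    · intro j _; exact zero_le
    · intro j _
      rw [Set.indicator_apply]
      split <;> simp
  -- the main induction
  have hmarg : ∀ s : Finset (Fin n),
      ENNReal.ofReal (Real.pi * r^2) ^ s.card * Fb x ≤
        (MeasureTheory.lmarginal (fun _ : Fin n => (volume : Measure ℂ)) s Fb) x := by
    intro s
    induction s using Finset.induction_on with
    | empty =>
      rw [MeasureTheory.lmarginal_empty, Finset.card_empty, pow_zero, one_mul]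
    | @insert i s hi IH =>
      rw [MeasureTheory.lmarginal_insert' _ hFbm hi]
      set g' : (Fin n → ℂ) → ℝ≥0∞ :=
        fun z => ∫⁻ xi, Fb (Function.update z i xi) with hg'def
      have hstep : ∀ z : Fin n → ℂ, z i = x i →
          ENNReal.ofReal (Real.pi * r^2) * Fb z ≤ g' z := by
        intro z hzx
        set C : ℝ≥0∞ := ∏ j ∈ Finset.univ.erase i,
          (Metric.ball (x j) r).indicator (fun _ => (1:ℝ≥0∞)) (z j) with hCdef
        have hC1 : C ≤ 1 := by
          apply Finset.prod_le_one
          · intro j _; exact zero_le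
          · intro j _
            rw [Set.indicator_apply]; split <;> simp
        have hCtop : C ≠ ⊤ := fun h => by simp [h] at hC1
        have hFb_upd : ∀ l : ℂ, Fb (Function.update z i l) =
            (Metric.ball (x i) r).indicator (fun _ => (1:ℝ≥0∞)) l *
              (C * Fden φ f ε (Function.update z i l)) := by
          intro l
          rw [hFbdef]
          simp only
          have hprod : (∏ j, (Metric.ball (x j) r).indicator (fun _ => (1:ℝ≥0∞))
              (Function.update z i l j)) =
              (Metric.ball (x i) r).indicator (fun _ => (1:ℝ≥0∞)) l * C := by
            have hfun : (fun j => (Metric.ball (x j) r).indicator (fun _ => (1:ℝ≥0∞))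
                (Function.update z i l j)) = Function.update
                (fun j => (Metric.ball (x j) r).indicator (fun _ => (1:ℝ≥0∞)) (z j)) i
                ((Metric.ball (x i) r).indicator (fun _ => (1:ℝ≥0∞)) l) := by
              funext j
              by_cases hj : j = i
              · subst hj; rw [Function.update_self, Function.update_self]
              · rw [Function.update_of_ne hj, Function.update_of_ne hj]
            rw [hfun, Finset.prod_update_of_mem (Finset.mem_univ i), hCdef,
              Finset.sdiff_singleton_eq_erase]
          rw [hprod]
          ring
        have hint_upd : g' z = C * ∫⁻ l in Metric.ball (x i) r,
            Fden φ f ε (Function.update z i l) := by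
          rw [hg'def]
          simp only
          rw [show (fun xi => Fb (Function.update z i xi)) = fun l =>
            (Metric.ball (x i) r).indicator
              (fun l' => C * Fden φ f ε (Function.update z i l')) l from ?_]
          · rw [lintegral_indicator measurableSet_ball,
              lintegral_const_mul' _ _ hCtop]
          · funext l
            rw [hFb_upd l, Set.indicator_apply, Set.indicator_apply]
            split <;> simp
        have hdisk := disk_bound hΩ hΩ' hφc hφm hf0 hfm hpsh hr.1 i
          (show ‖z i‖ ≤ 1 - r by rw [hzx]; exact hx i)
        rw [hzx] at hdisk
        have hFb_le : Fb z ≤ Fden φ f ε z * C := by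
          rw [hFbdef]
          simp only
          rw [← Finset.mul_prod_erase Finset.univ _ (Finset.mem_univ i), ← hCdef]
          rw [← mul_assoc]
          apply mul_le_mul_left
          calc Fden φ f ε z * (Metric.ball (x i) r).indicator (fun _ => (1:ℝ≥0∞)) (z i)
              ≤ Fden φ f ε z * 1 := by
                apply mul_le_mul_right
                rw [Set.indicator_apply]; split <;> simp
            _ = Fden φ f ε z := mul_one _
        calc ENNReal.ofReal (Real.pi * r^2) * Fb z
            ≤ ENNReal.ofReal (Real.pi * r^2) * (Fden φ f ε z * C) :=
              mul_le_mul_right hFb_le _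
          _ = C * (ENNReal.ofReal (Real.pi * r^2) * Fden φ f ε z) := by ring
          _ ≤ C * ∫⁻ l in Metric.ball (x i) r, Fden φ f ε (Function.update z i l) :=
              mul_le_mul_right hdisk _
          _ = g' z := hint_upd.symm
      have hmono : (MeasureTheory.lmarginal (fun _ : Fin n => (volume : Measure ℂ)) s
            (fun z => ENNReal.ofReal (Real.pi * r^2) * Fb z)) x ≤
          (MeasureTheory.lmarginal (fun _ : Fin n => (volume : Measure ℂ)) s g') x := by
        rw [MeasureTheory.lmarginal, MeasureTheory.lmarginal]
        apply lintegral_mono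
        intro y
        apply hstep
        simp [Function.updateFinset, hi]
      have hconst : (MeasureTheory.lmarginal (fun _ : Fin n => (volume : Measure ℂ)) s
            (fun z => ENNReal.ofReal (Real.pi * r^2) * Fb z)) x =
          ENNReal.ofReal (Real.pi * r^2) *
            (MeasureTheory.lmarginal (fun _ : Fin n => (volume : Measure ℂ)) s Fb) x := by
        rw [MeasureTheory.lmarginal, MeasureTheory.lmarginal]
        exact lintegral_const_mul' _ _ ENNReal.ofReal_ne_top
      calc ENNReal.ofReal (Real.pi * r^2) ^ (insert i s).card * Fb x
          = ENNReal.ofReal (Real.pi * r^2) *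
              (ENNReal.ofReal (Real.pi * r^2) ^ s.card * Fb x) := by
            rw [Finset.card_insert_of_notMem hi, pow_succ]
            ring
        _ ≤ ENNReal.ofReal (Real.pi * r^2) *
              (MeasureTheory.lmarginal (fun _ : Fin n => (volume : Measure ℂ)) s Fb) x :=
            mul_le_mul_right IH _
        _ = (MeasureTheory.lmarginal (fun _ : Fin n => (volume : Measure ℂ)) s
              (fun z => ENNReal.ofReal (Real.pi * r^2) * Fb z)) x := hconst.symm
        _ ≤ (MeasureTheory.lmarginal (fun _ : Fin n => (volume : Measure ℂ)) s g') x := hmono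
  -- specialize to univ
  have huniv := hmarg Finset.univ
  rw [MeasureTheory.lmarginal_univ] at huniv
  have hcard : (Finset.univ : Finset (Fin n)).card = n := by simp
  rw [hcard] at huniv
  have hFbx : Fb x = Fden φ f ε x := by
    rw [hFbdef]
    simp only
    rw [Finset.prod_eq_one, mul_one]
    intro j _
    rw [Set.indicator_of_mem]
    rw [Metric.mem_ball, dist_self]
    exact hr.1
  rw [hFbx] at huniv
  -- bound the integral of Fb
  have hFb_ind : Fb = Set.indicator (Set.pi Set.univ (fun j => Metric.ball (x j) r))
      (Fden φ f ε) := by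
    funext z
    by_cases hz : z ∈ Set.pi Set.univ (fun j => Metric.ball (x j) r)
    · rw [Set.indicator_of_mem hz, hFbdef]
      simp only
      rw [Finset.prod_eq_one, mul_one]
      intro j _
      exact Set.indicator_of_mem (hz j (Set.mem_univ j)) _
    · rw [Set.indicator_of_notMem hz, hFbdef]
      simp only
      rw [Set.mem_pi] at hz
      push_neg at hz
      obtain ⟨j, _, hj⟩ := hz
      rw [Finset.prod_eq_zero (Finset.mem_univ j)]
      · rw [mul_zero]
      · exact Set.indicator_of_notMem hj _
  have hball_sub : Set.pi Set.univ (fun j => Metric.ball (x j) r) ⊆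
      {z : Fin n → ℂ | ∀ i, ‖z i‖ < 1} := by
    intro z hz i
    have h1 := hz i (Set.mem_univ i)
    rw [Metric.mem_ball, Complex.dist_eq] at h1
    calc ‖z i‖ = ‖z i - x i + x i‖ := by ring_nf
      _ ≤ ‖z i - x i‖ + ‖x i‖ := norm_add_le _ _
      _ < r + (1 - r) := add_lt_add_of_lt_of_le h1 (hx i)
      _ = 1 := by ring
  have hIntFb : (∫⁻ z, Fb z) ≤ ENNReal.ofReal (M * m * Real.exp (ε * φ x)) := by
    rw [hFb_ind, lintegral_indicator (MeasurableSet.univ_pi fun j => measurableSet_ball)]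
    calc ∫⁻ z in Set.pi Set.univ (fun j => Metric.ball (x j) r), Fden φ f ε z
        ≤ ∫⁻ z in Set.pi Set.univ (fun j => Metric.ball (x j) r),
            ENNReal.ofReal (M * m * Real.exp (ε * φ x)) * ENNReal.ofReal (Ω.indicator f z) := by
          apply setLIntegral_mono
            (measurable_const.mul (ENNReal.measurable_ofReal.comp hfm))
          intro z hz
          have hzCP : z ∈ CP n := fun j => (le_of_lt (hball_sub hz j))
          simp only [Pi.mul_apply, Function.comp_apply]
          rw [Fden_of_mem hzCP, Set.indicator_of_mem (hΩ' hzCP),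
            ENNReal.ofReal_mul (hf0 z),
            mul_comm (ENNReal.ofReal (M * m * Real.exp (ε * φ x))) _]
          exact mul_le_mul_right
            (ENNReal.ofReal_le_ofReal (exp_eps_bound hΩ' hφc hε hxCP hzCP)) _
      _ = ENNReal.ofReal (M * m * Real.exp (ε * φ x)) *
            ∫⁻ z in Set.pi Set.univ (fun j => Metric.ball (x j) r),
              ENNReal.ofReal (Ω.indicator f z) := lintegral_const_mul' _ _ ENNReal.ofReal_ne_top
      _ ≤ ENNReal.ofReal (M * m * Real.exp (ε * φ x)) *
            ∫⁻ z in {z : Fin n → ℂ | ∀ i, ‖z i‖ < 1},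
              ENNReal.ofReal (Ω.indicator f z) :=
          mul_le_mul_right (lintegral_mono_set hball_sub) _
      _ = ENNReal.ofReal (M * m * Real.exp (ε * φ x)) *
            ∫⁻ z in {z : Fin n → ℂ | ∀ i, ‖z i‖ < 1},
              ENNReal.ofReal (f z) := by
          congr 1
          apply setLIntegral_congr_fun
          · apply IsOpen.measurableSet
            have hOP : {z : Fin n → ℂ | ∀ i, ‖z i‖ < 1} =
                ⋂ i, (fun z : Fin n → ℂ => ‖z i‖) ⁻¹' (Set.Iio 1) := by
              ext z; simp
            rw [hOP]
            exact isOpen_iInter_of_finite fun i =>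
              IsOpen.preimage (continuous_norm.comp (continuous_apply i)) isOpen_Iio
          · intro z hz
            have hzCP : z ∈ CP n := fun j => (hz j).le
            beta_reduce
            rw [Set.indicator_of_mem (hΩ' hzCP)]
      _ ≤ ENNReal.ofReal (M * m * Real.exp (ε * φ x)) * 1 := mul_le_mul_right hint _
      _ = ENNReal.ofReal (M * m * Real.exp (ε * φ x)) := mul_one _
  have huniv' : ENNReal.ofReal (Real.pi * r^2) ^ n * Fden φ f ε x ≤ ∫⁻ z, Fb z := by
    rw [MeasureTheory.volume_pi]
    exact huniv
  have hcomb := huniv'.trans hIntFb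
  set b : ℝ≥0∞ := ENNReal.ofReal (Real.exp (ε * φ x)) with hbdef
  have hb0 : b ≠ 0 := (ENNReal.ofReal_pos.2 (Real.exp_pos _)).ne'
  have hbt : b ≠ ⊤ := ENNReal.ofReal_ne_top
  have h2 : (ENNReal.ofReal (f x) * ENNReal.ofReal (Real.pi * r^2) ^ n) * b ≤
      ENNReal.ofReal (M * m) * b := by
    calc (ENNReal.ofReal (f x) * ENNReal.ofReal (Real.pi * r^2) ^ n) * b
        = ENNReal.ofReal (Real.pi * r^2) ^ n * (ENNReal.ofReal (f x) * b) := by ring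
      _ = ENNReal.ofReal (Real.pi * r^2) ^ n * Fden φ f ε x := by
          rw [Fden_of_mem hxCP, ENNReal.ofReal_mul (hf0 x)]
      _ ≤ ENNReal.ofReal (M * m * Real.exp (ε * φ x)) := hcomb
      _ = ENNReal.ofReal (M * m) * b := by
          rw [ENNReal.ofReal_mul (mul_nonneg hMpos.le hmpos.le)]
  have h3 := (ENNReal.mul_le_mul_iff_left hb0 hbt).mp h2
  rw [← ENNReal.ofReal_pow (by positivity : (0:ℝ) ≤ Real.pi * r^2)] at h3
  have hppos : (0:ℝ) < (Real.pi * r^2) ^ n :=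
    pow_pos (mul_pos Real.pi_pos (pow_pos hr.1 2)) n
  have h4 : ENNReal.ofReal (f x) ≤ ENNReal.ofReal (M * m) /
      ENNReal.ofReal ((Real.pi * r^2) ^ n) :=
    (ENNReal.le_div_iff_mul_le (Or.inl (ENNReal.ofReal_pos.2 hppos).ne')
      (Or.inl ENNReal.ofReal_ne_top)).mpr h3
  calc ENNReal.ofReal (f x) ≤ ENNReal.ofReal (M * m) /
        ENNReal.ofReal ((Real.pi * r^2) ^ n) := h4
    _ = ENNReal.ofReal (((Real.pi * r ^ 2) ^ n)⁻¹ * M * m) := by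
        rw [← ENNReal.ofReal_div_of_pos hppos]
        congr 1
        rw [div_eq_mul_inv]
        ring

end UUE

/-- Lemma 2.1, local form (uniform upper estimate): for `r ∈ (0,1)`, `ε ∈ (0,1]` and
`x ∈ Δⁿ` with all `|x_i| ≤ 1 - r`, one has
`V_ε^φ(x) ≤ (π r²)^{-n} · (sup_{closed Δⁿ} e^{φ}) · (sup_{closed Δⁿ} e^{-φ})`; in
particular the envelopes are bounded on compacts of `Δⁿ`, uniformly in `ε ∈ (0,1]`. -/
theorem uniform_upper_estimate (n : ℕ) (Ω : Set (Fin n → ℂ)) (hΩ : IsOpen Ω)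
    (hΩ' : closedPolydisk n ⊆ Ω)
    (φ : (Fin n → ℂ) → ℝ) (hφc : ContinuousOn φ Ω)
    (hφpsh : IsPSHOn Ω (fun z => ((φ z : ℝ) : EReal))) :
    (∀ r : ℝ, r ∈ Set.Ioo (0 : ℝ) 1 → ∀ ε : ℝ, ε ∈ Set.Ioc (0 : ℝ) 1 →
      ∀ x ∈ openPolydisk n, (∀ i, ‖x i‖ ≤ 1 - r) →
      Venv Ω φ ε x ≤ ENNReal.ofReal
        (((Real.pi * r ^ 2) ^ n)⁻¹ *
          sSup ((fun z => Real.exp (φ z)) '' closedPolydisk n) *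
          sSup ((fun z => Real.exp (-(φ z))) '' closedPolydisk n))) ∧
    (∀ K : Set (Fin n → ℂ), IsCompact K → K ⊆ openPolydisk n →
      ∃ C : ℝ≥0∞, C ≠ ⊤ ∧ ∀ ε : ℝ, ε ∈ Set.Ioc (0 : ℝ) 1 →
        ∀ x ∈ K, Venv Ω φ ε x ≤ C)  := by
  classical
  have hmain : ∀ r : ℝ, r ∈ Set.Ioo (0 : ℝ) 1 → ∀ ε : ℝ, ε ∈ Set.Ioc (0 : ℝ) 1 →
      ∀ x ∈ openPolydisk n, (∀ i, ‖x i‖ ≤ 1 - r) →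
      Venv Ω φ ε x ≤ ENNReal.ofReal
        (((Real.pi * r ^ 2) ^ n)⁻¹ *
          sSup ((fun z => Real.exp (φ z)) '' closedPolydisk n) *
          sSup ((fun z => Real.exp (-(φ z))) '' closedPolydisk n)) := by
    intro r hr ε hε x hxOP hx
    have hV : Venv Ω φ ε x = ⨆ f ∈ Scal Ω φ ε, ENNReal.ofReal (f x) := rfl
    rw [hV]
    apply iSup₂_le
    intro f hf
    obtain ⟨hf0, husc, hpsh, hint⟩ := hf
    have hΩ'' : UUE.CP n ⊆ Ω := hΩ'
    have hfm := UUE.usc_indicator_measurable hΩ husc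
    have hφm := UUE.usc_indicator_measurable hΩ hφc.upperSemicontinuousOn
    have hpsh' : UUE.IsPSHOn' Ω (fun z => elog (f z) + ((ε * φ z : ℝ) : EReal)) := hpsh
    exact UUE.pointwise_bound hΩ hΩ'' hφc hφm hf0 hfm hε hpsh' hint hr hx
  refine ⟨hmain, ?_⟩
  intro K hK hKsub
  rcases Set.eq_empty_or_nonempty K with rfl | hKne
  · exact ⟨1, ENNReal.one_ne_top, fun ε _ x hx => absurd hx (Set.notMem_empty x)⟩
  set U : ℕ → Set (Fin n → ℂ) := fun mm => {z | ‖z‖ < 1 - 1/((mm:ℝ)+2)} with hU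
  have hUopen : ∀ mm, IsOpen (U mm) := fun mm => isOpen_lt continuous_norm continuous_const
  have hUmono : ∀ m1 m2 : ℕ, m1 ≤ m2 → U m1 ⊆ U m2 := by
    intro m1 m2 h z hz
    simp only [hU, Set.mem_setOf_eq] at hz ⊢
    have hc : (m1:ℝ) ≤ (m2:ℝ) := Nat.cast_le.2 h
    have h1 : (0:ℝ) < (m1:ℝ) + 2 := by positivity
    have : 1/((m2:ℝ)+2) ≤ 1/((m1:ℝ)+2) := by
      apply one_div_le_one_div_of_le h1
      linarith
    linarith
  have hcover : K ⊆ ⋃ mm, U mm := by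
    intro z hz
    have hzOP := hKsub hz
    have hnorm : ‖z‖ < 1 := by
      rw [pi_norm_lt_iff one_pos]
      intro i
      exact hzOP i
    obtain ⟨mm, hmm⟩ := exists_nat_gt (1/(1 - ‖z‖))
    refine Set.mem_iUnion.2 ⟨mm, ?_⟩
    simp only [hU, Set.mem_setOf_eq]
    have h1 : (0:ℝ) < 1 - ‖z‖ := by linarith
    have hmm2 : 1/(1-‖z‖) < (mm:ℝ) + 2 := lt_of_lt_of_le hmm (by linarith)
    have h2 : 1/((mm:ℝ)+2) < 1 - ‖z‖ := by
      rw [div_lt_iff₀ (by positivity : (0:ℝ) < (mm:ℝ)+2)]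
      have hkey : (1-‖z‖) * (1/(1-‖z‖)) = 1 := by field_simp
      nlinarith [h1, hmm2]
    linarith
  obtain ⟨t, ht⟩ := hK.elim_finite_subcover U hUopen hcover
  have htne : t.Nonempty := by
    obtain ⟨z0, hz0⟩ := hKne
    obtain ⟨mm, hmt, _⟩ := Set.mem_iUnion₂.1 (ht hz0)
    exact ⟨mm, hmt⟩
  set M₀ : ℕ := t.max' htne with hM₀
  have hKU : K ⊆ U M₀ := by
    intro z hz
    obtain ⟨mm, hmt, hzU⟩ := Set.mem_iUnion₂.1 (ht hz)
    exact hUmono mm M₀ (t.le_max' mm hmt) hzU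
  set r : ℝ := 1/((M₀:ℝ)+2) with hrdef
  have hr : r ∈ Set.Ioo (0:ℝ) 1 := by
    constructor
    · positivity
    · rw [hrdef, div_lt_one (by positivity : (0:ℝ) < (M₀:ℝ)+2)]
      have := (Nat.cast_nonneg M₀ : (0:ℝ) ≤ (M₀:ℝ))
      linarith
  refine ⟨ENNReal.ofReal
    (((Real.pi * r ^ 2) ^ n)⁻¹ *
      sSup ((fun z => Real.exp (φ z)) '' closedPolydisk n) *
      sSup ((fun z => Real.exp (-(φ z))) '' closedPolydisk n)),
    ENNReal.ofReal_ne_top, ?_⟩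
  intro ε hε x hx
  apply hmain r hr ε hε x (hKsub hx)
  intro i
  have hxU := hKU hx
  simp only [hU, Set.mem_setOf_eq] at hxU
  have := le_trans (norm_le_pi_norm x i) hxU.le
  linarith

end
end

section
/- Let Λ = ℤⁿ + iℤⁿ ⊂ ℂⁿ and D = [0,1)ⁿ + i[0,1)ⁿ. There exists a constant C, depending only on n, with the following property: for every ε ∈ (0, 1], every Λ-periodic upper semicontinuous ψ : ℂⁿ → [−∞, ∞) such that z ↦ ψ(z) + ε|z|² is plurisubharmonic on ℂⁿ and ∫_D e^{ψ} dλ = 1, and every x ∈ ℂⁿ, one has e^{ψ(x)} ≤ C. -/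
open MeasureTheory Set
open scoped ENNReal NNReal

noncomputable section

/-- `ψ` is periodic with respect to the lattice `Λ = ℤⁿ + iℤⁿ ⊂ ℂⁿ`. -/
def LambdaPeriodic {n : ℕ} (ψ : (Fin n → ℂ) → EReal) : Prop :=
  ∀ z : Fin n → ℂ, ∀ k l : Fin n → ℤ,
    ψ (fun i => z i + (k i : ℂ) + (l i : ℂ) * Complex.I) = ψ z

/-- The fundamental domain `D = [0,1)ⁿ + i[0,1)ⁿ` of the torus `ℂⁿ/Λ`. -/
def fundDomain (n : ℕ) : Set (Fin n → ℂ) :=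
  {z | ∀ i, (z i).re ∈ Set.Ico (0 : ℝ) 1 ∧ (z i).im ∈ Set.Ico (0 : ℝ) 1}

/-- The class `A_ε` of admissible weights on the torus `ℂⁿ/Λ`: `Λ`-periodic upper
semicontinuous `ψ` with `ψ(z) + ε|z|²` plurisubharmonic and `∫_D e^ψ dλ = 1`. -/
def Aset (n : ℕ) (ε : ℝ) : Set ((Fin n → ℂ) → EReal) :=
  {ψ | LambdaPeriodic ψ ∧ UpperSemicontinuous ψ ∧
    IsPSHOn Set.univ (fun z => ψ z + ((ε * ∑ i, Complex.normSq (z i) : ℝ) : EReal)) ∧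
    (∫⁻ z in fundDomain n, EReal.exp (ψ z)) = 1}

/-- The approximating canonical volume density `dV_ε(x) = sup{e^{ψ(x)} : ψ ∈ A_ε}`. -/
def dVeps (n : ℕ) (ε : ℝ) (x : Fin n → ℂ) : ℝ≥0∞ :=
  ⨆ ψ ∈ Aset n ε, EReal.exp (ψ x)


/-! ### Auxiliary lemmas -/

section Helpers

open Real

lemma erealToENNReal_coe (x : ℝ) : erealToENNReal (x : EReal) = ENNReal.ofReal x := by
  simp [erealToENNReal]

lemma erealToENNReal_bot : erealToENNReal ⊥ = 0 := by simp [erealToENNReal]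

lemma erealToENNReal_top : erealToENNReal ⊤ = ⊤ := by simp [erealToENNReal]

lemma erealToENNReal_mono : Monotone erealToENNReal := by
  intro x y h
  induction x with
  | bot => simp [erealToENNReal_bot]
  | top => rw [top_le_iff.mp h]
  | coe x =>
    induction y with
    | bot => simp at h
    | top => simp [erealToENNReal_top]
    | coe y =>
      rw [erealToENNReal_coe, erealToENNReal_coe]
      exact ENNReal.ofReal_le_ofReal (by exact_mod_cast h)

lemma erealToENNReal_le_exp (x : EReal) : erealToENNReal x ≤ EReal.exp x := by
  induction x with
  | bot => simp [erealToENNReal_bot]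
  | top => simp [erealToENNReal_top]
  | coe x =>
    rw [erealToENNReal_coe, EReal.exp_coe]
    exact ENNReal.ofReal_le_ofReal (by linarith [Real.add_one_le_exp x])

lemma erealToENNReal_add_coe_le (a : EReal) (c : ℝ) :
    erealToENNReal (a + (c : EReal)) ≤ erealToENNReal a + ENNReal.ofReal c := by
  induction a with
  | bot => simp [erealToENNReal_bot]
  | top => simp [erealToENNReal_top]
  | coe a =>
    rw [← EReal.coe_add, erealToENNReal_coe, erealToENNReal_coe]
    exact ENNReal.ofReal_add_le

lemma le_coe_of_erealToENNReal_le {a : EReal} {c : ℝ} (hc : 0 ≤ c)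
    (h : erealToENNReal a ≤ ENNReal.ofReal c) : a ≤ (c : EReal) := by
  induction a with
  | bot => exact bot_le
  | top => simp [erealToENNReal_top, ENNReal.ofReal_lt_top.ne] at h
  | coe a =>
    rw [erealToENNReal_coe] at h
    rcases le_or_gt a 0 with h0 | h0
    · exact_mod_cast h0.trans hc
    · exact_mod_cast (ENNReal.ofReal_le_ofReal_iff hc).mp h

lemma erealToENNReal_const_mul (c : ℝ) (hc : 0 < c) (I : ℝ≥0∞) :
    erealToENNReal ((c : EReal) * (I : EReal)) = ENNReal.ofReal c * I := by
  cases I with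
  | top =>
    rw [EReal.coe_ennreal_top, EReal.coe_mul_top_of_pos (by exact_mod_cast hc),
      erealToENNReal_top, ENNReal.mul_top (by simp [hc])]
  | coe x =>
    have : ((x : ℝ≥0∞) : EReal) = ((x : ℝ) : EReal) := rfl
    rw [this, ← EReal.coe_mul, erealToENNReal_coe,
      ENNReal.ofReal_mul hc.le]
    simp [ENNReal.ofReal_coe_nnreal]

lemma erealToENNReal_measurable : Measurable erealToENNReal := by
  unfold erealToENNReal
  refine Measurable.ite ?_ measurable_const
    (ENNReal.measurable_ofReal.comp measurable_ereal_toReal)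
  rw [show {x : EReal | x = ⊤} = {⊤} from rfl]
  exact measurableSet_singleton _

lemma ereal_le_add_coe_of_nonneg (a : EReal) {c : ℝ} (hc : 0 ≤ c) :
    a ≤ a + (c : EReal) := by
  induction a with
  | bot => simp
  | top => simp
  | coe a =>
    rw [← EReal.coe_add]
    exact_mod_cast le_add_of_nonneg_right hc

lemma circle_ineq {v : EReal} {u : ℝ → EReal} (h : v ≤ circleMean u) :
    erealToENNReal v * ENNReal.ofReal (2 * Real.pi) ≤
      ∫⁻ θ in Set.Ioc (0:ℝ) (2*Real.pi), erealToENNReal (u θ) := by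
  set Ip : ℝ≥0∞ := ∫⁻ θ in Set.Ioc (0:ℝ) (2*Real.pi), erealToENNReal (u θ) with hIp
  have twopi_pos : (0:ℝ) < 2 * Real.pi := by positivity
  have h1 : circleMean u ≤ ((((2*Real.pi)⁻¹ : ℝ)) : EReal) * (Ip : EReal) := by
    unfold circleMean eintegral
    apply mul_le_mul_of_nonneg_left _ (by exact_mod_cast inv_nonneg.mpr twopi_pos.le)
    calc ((∫⁻ x, erealToENNReal (u x) ∂(volume.restrict (Set.Ioc (0:ℝ) (2*Real.pi))) : ℝ≥0∞) : EReal)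
          - _ ≤ (Ip : EReal) - (0 : EReal) := by
            exact EReal.sub_le_sub (le_of_eq rfl) (EReal.coe_ennreal_nonneg _)
      _ = (Ip : EReal) := by simp
  have h2 := erealToENNReal_mono (h.trans h1)
  rw [erealToENNReal_const_mul _ (by positivity) Ip] at h2
  calc erealToENNReal v * ENNReal.ofReal (2*Real.pi)
      ≤ (ENNReal.ofReal (2*Real.pi)⁻¹ * Ip) * ENNReal.ofReal (2*Real.pi) :=
        mul_le_mul_left h2 _
    _ = (ENNReal.ofReal (2*Real.pi)⁻¹ * ENNReal.ofReal (2*Real.pi)) * Ip := by ring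
    _ = 1 * Ip := by
        rw [← ENNReal.ofReal_mul (by positivity), inv_mul_cancel₀ twopi_pos.ne']
        simp
    _ = Ip := one_mul _

lemma angle_shift (G : ℝ → ℝ≥0∞) (hG : ∀ θ, G (θ + 2*π) = G θ) :
    ∫⁻ θ in Ioc (0:ℝ) (2*π), G θ = ∫⁻ θ in Ioo (-π) π, G θ := by
  have h1 : Ioc (0:ℝ) (2*π) = Ioc 0 π ∪ Ioc π (2*π) :=
    (Ioc_union_Ioc_eq_Ioc (by positivity) (by linarith [pi_pos])).symm
  have h2 : Ioc (-π) π = Ioc (-π) 0 ∪ Ioc 0 π :=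
    (Ioc_union_Ioc_eq_Ioc (by linarith [pi_pos]) (by positivity)).symm
  have h3 : ∫⁻ θ in Ioc π (2*π), G θ = ∫⁻ θ in Ioc (-π) 0, G θ := by
    have hpre : (fun x : ℝ => x + 2*π) ⁻¹' Ioc π (2*π) = Ioc (-π) 0 := by
      ext x; simp only [mem_preimage, mem_Ioc]
      constructor <;> intro h <;> constructor <;> linarith [h.1, h.2]
    have := (measurePreserving_add_right (volume : Measure ℝ) (2*π)).setLIntegral_comp_preimage_emb
      (measurableEmbedding_addRight (2*π)) G (Ioc π (2*π))
    rw [hpre] at this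
    rw [← this]
    exact lintegral_congr fun x => hG x
  have h4 : ∫⁻ θ in Ioc (-π) π, G θ = ∫⁻ θ in Ioo (-π) π, G θ :=
    setLIntegral_congr Ioo_ae_eq_Ioc.symm
  rw [h1, lintegral_union measurableSet_Ioc (by
      simp only [Set.disjoint_left, mem_Ioc]; intro a h1 h2; linarith [h1.2, h2.1]),
    h3, ← h4, h2, lintegral_union measurableSet_Ioc (by
      simp only [Set.disjoint_left, mem_Ioc]; intro a h1 h2; linarith [h1.2, h2.1])]
  ring

lemma polar_cov (F : ℝ×ℝ → ℝ≥0∞) (S : Set (ℝ×ℝ)) (hS : MeasurableSet S)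
    (hsub : S ⊆ polarCoord.target) :
    ∫⁻ q in polarCoord.symm '' S, F q
      = ∫⁻ p in S, ENNReal.ofReal |p.1| * F (polarCoord.symm p) := by
  set B : ℝ × ℝ → ℝ × ℝ →L[ℝ] ℝ × ℝ := fun p =>
    LinearMap.toContinuousLinearMap (Matrix.toLin (Module.Basis.finTwoProd ℝ) (Module.Basis.finTwoProd ℝ)
      !![cos p.2, -p.1 * sin p.2; sin p.2, p.1 * cos p.2])
  have B_det : ∀ p, (B p).det = p.1 := by
    intro p
    conv_rhs => rw [← one_mul p.1, ← cos_sq_add_sin_sq p.2]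
    simp only [B, neg_mul, LinearMap.det_toContinuousLinearMap, LinearMap.det_toLin,
      Matrix.det_fin_two_of, sub_neg_eq_add]
    ring
  have hinj : InjOn polarCoord.symm S := by
    have := polarCoord.symm.injOn
    rw [polarCoord.symm_source] at this
    exact this.mono hsub
  have := lintegral_image_eq_lintegral_abs_det_fderiv_mul volume hS
    (fun p _ => (hasFDerivAt_polarCoord_symm p).hasFDerivWithinAt) hinj F
  rw [this]
  apply lintegral_congr fun p => ?_
  rw [det_fderivPolarCoordSymm]

lemma disc_bound (f : ℂ → ℝ≥0∞) (hf : Measurable f) (c : ℝ≥0∞)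
    (h : ∀ r : ℝ, r ∈ Ioo (1/2:ℝ) 1 →
      c * ENNReal.ofReal (2*π) ≤ ∫⁻ θ in Ioc (0:ℝ) (2*π), f ((r:ℂ) * Complex.exp (θ*Complex.I))) :
    c * ENNReal.ofReal π ≤ 2 * ∫⁻ z in Metric.closedBall (0:ℂ) 1, f z := by
  set g : ℝ × ℝ → ℝ≥0∞ := fun p => f ((p.1:ℂ) * Complex.exp (p.2*Complex.I)) with hg
  set S : Set (ℝ×ℝ) := Ioo (1/2:ℝ) 1 ×ˢ Ioo (-π) π with hSdef
  have hS : MeasurableSet S := measurableSet_Ioo.prod measurableSet_Ioo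
  have hsub : S ⊆ polarCoord.target := by
    rintro ⟨r, θ⟩ ⟨hr, hθ⟩
    exact ⟨lt_trans (by norm_num) hr.1, hθ⟩
  have hgmeas : Measurable g := by
    apply hf.comp
    exact (Complex.continuous_ofReal.comp continuous_fst).mul
      ((Complex.continuous_ofReal.comp continuous_snd).mul continuous_const).cexp |>.measurable
  have hFg : ∀ p : ℝ × ℝ, f (Complex.measurableEquivRealProd.symm (polarCoord.symm p)) = g p := by
    rintro ⟨r, θ⟩
    congr 1
    rw [Complex.measurableEquivRealProd_symm_apply, polarCoord_symm_apply, Complex.exp_mul_I]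
    simp [Complex.ext_iff, Complex.cos_ofReal_re, Complex.sin_ofReal_re]
  have key1 : ∀ r ∈ Ioo (1/2:ℝ) 1,
      c * ENNReal.ofReal (2*π) ≤ ∫⁻ θ in Ioo (-π) π, g (r, θ) := by
    intro r hr
    rw [← angle_shift (fun θ => g (r, θ)) (fun θ => by
      simp only [hg]
      congr 2
      have h2 : ((θ + 2*π : ℝ) : ℂ) * Complex.I = θ*Complex.I + 2*π*Complex.I := by
        push_cast; ring
      rw [h2, Complex.exp_add, Complex.exp_two_pi_mul_I, mul_one])]
    exact h r hr
  have T : ∫⁻ p in S, g p = ∫⁻ r in Ioo (1/2:ℝ) 1, ∫⁻ θ in Ioo (-π) π, g (r, θ) := by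
    rw [hSdef, Measure.volume_eq_prod, ← Measure.prod_restrict,
      lintegral_prod _ hgmeas.aemeasurable]
  have lower : (c * ENNReal.ofReal (2*π)) * ENNReal.ofReal (1/2) ≤ ∫⁻ p in S, g p := by
    rw [T]
    calc (c * ENNReal.ofReal (2*π)) * ENNReal.ofReal (1/2)
        = (c * ENNReal.ofReal (2*π)) * volume (Ioo (1/2:ℝ) 1) := by
          rw [Real.volume_Ioo]; norm_num
      _ = ∫⁻ _ in Ioo (1/2:ℝ) 1, c * ENNReal.ofReal (2*π) := (setLIntegral_const _ _).symm
      _ ≤ _ := setLIntegral_mono' measurableSet_Ioo key1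
  have mid : ∫⁻ p in S, g p ≤ 2 * ∫⁻ p in S, ENNReal.ofReal |p.1| * g p := by
    rw [← lintegral_const_mul' 2 _ (by norm_num)]
    apply setLIntegral_mono' hS
    rintro ⟨r, θ⟩ ⟨hr, _⟩
    have h1 : (1:ℝ≥0∞) ≤ 2 * ENNReal.ofReal |r| := by
      have hhalf : (1/2:ℝ) ≤ |r| := by
        rw [abs_of_pos (by linarith [hr.1] : (0:ℝ) < r)]; linarith [hr.1]
      have : ENNReal.ofReal (1/2:ℝ) ≤ ENNReal.ofReal |r| := ENNReal.ofReal_le_ofReal hhalf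
      calc (1:ℝ≥0∞) = 2 * ENNReal.ofReal (1/2:ℝ) := by
            rw [← ENNReal.ofReal_ofNat, ← ENNReal.ofReal_mul (by norm_num)]; norm_num
        _ ≤ 2 * ENNReal.ofReal |r| := mul_le_mul_right this 2
    calc g (r, θ) = 1 * g (r, θ) := (one_mul _).symm
      _ ≤ (2 * ENNReal.ofReal |r|) * g (r, θ) := mul_le_mul_left h1 _
      _ = 2 * (ENNReal.ofReal |r| * g (r, θ)) := by ring
  have cov : ∫⁻ p in S, ENNReal.ofReal |p.1| * g p
      = ∫⁻ q in polarCoord.symm '' S, (fun q => f (Complex.measurableEquivRealProd.symm q)) q := by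
    rw [polar_cov _ S hS hsub]
    exact lintegral_congr fun p => by rw [hFg]
  have emb : ∫⁻ q in polarCoord.symm '' S, (fun q => f (Complex.measurableEquivRealProd.symm q)) q
      = ∫⁻ z in Complex.measurableEquivRealProd.symm '' (polarCoord.symm '' S), f z :=
    (Complex.volume_preserving_equiv_real_prod.symm).setLIntegral_comp_emb
      Complex.measurableEquivRealProd.symm.measurableEmbedding f _
  have himg : Complex.measurableEquivRealProd.symm '' (polarCoord.symm '' S)
      ⊆ Metric.closedBall (0:ℂ) 1 := by
    rintro z ⟨q, ⟨p, hpS, rfl⟩, rfl⟩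
    rw [Metric.mem_closedBall, dist_zero_right]
    have : Complex.measurableEquivRealProd.symm (polarCoord.symm p)
        = (p.1:ℂ) * Complex.exp (p.2*Complex.I) := by
      rw [Complex.measurableEquivRealProd_symm_apply, polarCoord_symm_apply, Complex.exp_mul_I]
      simp [Complex.ext_iff, Complex.cos_ofReal_re, Complex.sin_ofReal_re]
    rw [this]
    rw [norm_mul, Complex.norm_real, Real.norm_eq_abs]
    rcases hpS with ⟨hp1, _⟩
    have : ‖Complex.exp ((p.2:ℂ)*Complex.I)‖ = 1 := Complex.norm_exp_ofReal_mul_I p.2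
    rw [this, mul_one, abs_of_pos (by linarith [hp1.1] : (0:ℝ) < p.1)]
    exact (hp1.2).le
  calc c * ENNReal.ofReal π = (c * ENNReal.ofReal (2*π)) * ENNReal.ofReal (1/2) := by
        rw [mul_assoc, ← ENNReal.ofReal_mul (by positivity),
          show 2*π*(1/2:ℝ) = π by ring]
    _ ≤ ∫⁻ p in S, g p := lower
    _ ≤ 2 * ∫⁻ p in S, ENNReal.ofReal |p.1| * g p := mid
    _ = 2 * ∫⁻ z in Complex.measurableEquivRealProd.symm '' (polarCoord.symm '' S), f z := by
        rw [cov, emb]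
    _ ≤ 2 * ∫⁻ z in Metric.closedBall (0:ℂ) 1, f z :=
        mul_le_mul_right (lintegral_mono_set himg) 2

lemma measurable_fin_cons {n : ℕ} (ζ : ℂ) :
    Measurable (fun y : Fin n → ℂ => (Fin.cons ζ y : Fin (n+1) → ℂ)) := by
  rw [measurable_pi_iff]
  intro i
  refine Fin.cases ?_ ?_ i
  · simpa using measurable_const
  · intro k; simpa using measurable_pi_apply k

lemma update_zero_eq_cons {n : ℕ} (x : Fin (n+1) → ℂ) (ζ : ℂ) :
    Function.update x 0 ζ = Fin.cons ζ (fun j => x j.succ) := by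
  funext j
  refine Fin.cases ?_ ?_ j
  · simp
  · intro k
    rw [Function.update_apply]
    simp [(Fin.succ_ne_zero k)]

lemma cons_update {n : ℕ} (ζ : ℂ) (a : Fin n → ℂ) (i : Fin n) (v : ℂ) :
    (Fin.cons ζ (Function.update a i v) : Fin (n+1) → ℂ)
      = Function.update (Fin.cons ζ a) i.succ v := by
  funext j
  refine Fin.cases ?_ ?_ j
  · rw [Function.update_apply]
    simp [(Fin.succ_ne_zero i).symm]
  · intro k
    rw [Fin.cons_succ, Function.update_apply, Function.update_apply]
    by_cases hk : k = i
    · simp [hk]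
    · simp [hk, fun h => hk (Fin.succ_injective _ h)]

lemma measurableSet_polydisk {n : ℕ} (x : Fin n → ℂ) :
    MeasurableSet {z : Fin n → ℂ | ∀ i, ‖z i - x i‖ ≤ 1} := by
  have : {z : Fin n → ℂ | ∀ i, ‖z i - x i‖ ≤ 1}
      = ⋂ j, {z : Fin n → ℂ | ‖z j - x j‖ ≤ 1} := by
    ext y; simp
  rw [this]
  refine MeasurableSet.iInter fun j => ?_
  refine measurableSet_le ?_ measurable_const
  have : (fun y : Fin n → ℂ => ‖y j - x j‖)
      = fun y => ‖y j - x j‖ := by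
    rfl
  rw [this]
  exact ((measurable_pi_apply j).sub measurable_const).norm

theorem polydisk_bound : ∀ (n : ℕ) (w : (Fin n → ℂ) → ℝ≥0∞), Measurable w →
    (∀ (a : Fin n → ℂ) (i : Fin n), ∀ r ∈ Ioo (1/2:ℝ) 1,
      w a * ENNReal.ofReal (2*π) ≤
        ∫⁻ θ in Ioc (0:ℝ) (2*π),
          w (Function.update a i (a i + (r:ℂ) * Complex.exp (θ*Complex.I)))) →
    ∀ x : Fin n → ℂ,
      w x * (ENNReal.ofReal π)^n
        ≤ 2^n * ∫⁻ z in {z : Fin n → ℂ | ∀ i, ‖z i - x i‖ ≤ 1}, w z := by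
  intro n
  induction n with
  | zero =>
    intro w hw _ x
    have hset : {z : Fin 0 → ℂ | ∀ i, ‖z i - x i‖ ≤ 1} = univ :=
      eq_univ_of_forall fun z i => i.elim0
    rw [hset, pow_zero, pow_zero, mul_one, one_mul, Measure.restrict_univ]
    have hvol : (volume : Measure (Fin 0 → ℂ)) = Measure.dirac isEmptyElim := by
      rw [volume_pi, Measure.pi_of_empty]
    rw [hvol, lintegral_dirac' _ hw]
    exact le_of_eq (congrArg w (Subsingleton.elim _ _))
  | succ n IH =>
    intro w hw hsub x
    set p : ℝ≥0∞ := ENNReal.ofReal π with hp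
    set x' : Fin n → ℂ := fun j => x j.succ with hx'
    set P' : Set (Fin n → ℂ) := {y | ∀ j, ‖y j - x' j‖ ≤ 1} with hP'
    have hP'meas : MeasurableSet P' := measurableSet_polydisk x'
    have hA : w x * p ≤ 2 * ∫⁻ ζ in Metric.closedBall (0:ℂ) 1,
        w (Function.update x 0 (x 0 + ζ)) := by
      apply disc_bound _ ?_ (w x)
      · intro r hr
        simpa using hsub x 0 r hr
      · exact hw.comp ((measurable_update x).comp (measurable_const.add measurable_id))
    have hB : ∫⁻ ζ in Metric.closedBall (0:ℂ) 1, w (Function.update x 0 (x 0 + ζ))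
        = ∫⁻ ζ in Metric.closedBall (x 0) 1, w (Function.update x 0 ζ) := by
      have hpre : (fun ζ : ℂ => x 0 + ζ) ⁻¹' Metric.closedBall (x 0) 1
          = Metric.closedBall (0:ℂ) 1 := by
        ext ζ; simp [Complex.dist_eq]
      have := (measurePreserving_add_left (volume : Measure ℂ) (x 0)).setLIntegral_comp_preimage_emb
        (measurableEmbedding_addLeft (x 0)) (fun ζ => w (Function.update x 0 ζ))
        (Metric.closedBall (x 0) 1)
      rw [hpre] at this
      exact this
    have hC : ∀ ζ : ℂ, ζ ∈ Metric.closedBall (x 0) 1 →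
        w (Function.update x 0 ζ) * p^n
          ≤ 2^n * ∫⁻ y in P', w (Fin.cons ζ y) := by
      intro ζ _
      have hwζ : Measurable (fun y : Fin n → ℂ => w (Fin.cons ζ y)) :=
        hw.comp (measurable_fin_cons ζ)
      have hsubζ : ∀ (a : Fin n → ℂ) (i : Fin n), ∀ r ∈ Ioo (1/2:ℝ) 1,
          w (Fin.cons ζ a) * ENNReal.ofReal (2*π) ≤
            ∫⁻ θ in Ioc (0:ℝ) (2*π),
              w (Fin.cons ζ (Function.update a i (a i + (r:ℂ) * Complex.exp (θ*Complex.I)))) := by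
        intro a i r hr
        have := hsub (Fin.cons ζ a) i.succ r hr
        simp only [Fin.cons_succ] at this
        calc w (Fin.cons ζ a) * ENNReal.ofReal (2*π) ≤ _ := this
          _ = _ := lintegral_congr fun θ => by rw [cons_update]
      have := IH (fun y => w (Fin.cons ζ y)) hwζ hsubζ x'
      rw [update_zero_eq_cons]
      exact this
    set e : (Fin (n+1) → ℂ) ≃ᵐ ℂ × (Fin n → ℂ) :=
      MeasurableEquiv.piFinSuccAbove (fun _ : Fin (n+1) => ℂ) 0 with he
    have hesymm : ∀ q : ℂ × (Fin n → ℂ), e.symm q = Fin.cons q.1 q.2 := by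
      intro q
      rw [he, MeasurableEquiv.piFinSuccAbove_symm_apply]
      simp [Fin.insertNthEquiv, Fin.insertNth_zero']
    have mp : MeasurePreserving e volume
        ((volume : Measure ℂ).prod (volume : Measure (Fin n → ℂ))) := by
      have h := measurePreserving_piFinSuccAbove (fun _ : Fin (n+1) => (volume : Measure ℂ)) 0
      rw [volume_pi, volume_pi (ι := Fin n)]
      exact h
    set P : Set (Fin (n+1) → ℂ) := {z | ∀ i, ‖z i - x i‖ ≤ 1} with hP
    have hpreim : e ⁻¹' ((Metric.closedBall (x 0) 1) ×ˢ P') = P := by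
      ext z
      simp only [mem_preimage, mem_prod, hP, mem_setOf_eq, Metric.mem_closedBall]
      constructor
      · rintro ⟨h0, hs⟩ i
        refine Fin.cases ?_ ?_ i
        · rw [← Complex.dist_eq]; exact h0
        · intro k; exact hs k
      · intro hz
        refine ⟨?_, fun k => hz k.succ⟩
        rw [Complex.dist_eq]
        exact hz 0
    have key : ∫⁻ ζ in Metric.closedBall (x 0) 1, ∫⁻ y in P', w (Fin.cons ζ y)
        = ∫⁻ z in P, w z := by
      have hm : AEMeasurable (fun q : ℂ × (Fin n → ℂ) => w (e.symm q))
          (((volume : Measure ℂ).restrict (Metric.closedBall (x 0) 1)).prod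
            ((volume : Measure (Fin n → ℂ)).restrict P')) :=
        (hw.comp e.symm.measurable).aemeasurable
      have h1 : ∫⁻ q in (Metric.closedBall (x 0) 1) ×ˢ P', w (e.symm q)
            ∂((volume : Measure ℂ).prod (volume : Measure (Fin n → ℂ)))
          = ∫⁻ ζ in Metric.closedBall (x 0) 1, ∫⁻ y in P', w (Fin.cons ζ y) := by
        rw [← Measure.prod_restrict, lintegral_prod _ hm]
        exact lintegral_congr fun ζ => lintegral_congr fun y => by rw [hesymm]
      have h2 := mp.setLIntegral_comp_preimage_emb e.measurableEmbedding
        (fun q => w (e.symm q)) ((Metric.closedBall (x 0) 1) ×ˢ P')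
      rw [hpreim] at h2
      rw [← h1, ← h2]
      exact lintegral_congr fun z => by rw [e.symm_apply_apply]
    have hpn : (p^n : ℝ≥0∞) ≠ ⊤ := ENNReal.pow_ne_top ENNReal.ofReal_ne_top
    calc w x * p^(n+1) = (w x * p) * p^n := by ring
      _ ≤ (2 * ∫⁻ ζ in Metric.closedBall (0:ℂ) 1,
            w (Function.update x 0 (x 0 + ζ))) * p^n := mul_le_mul_left hA _
      _ = 2 * ∫⁻ ζ in Metric.closedBall (x 0) 1, w (Function.update x 0 ζ) * p^n := by
          rw [hB, lintegral_mul_const' _ _ hpn, mul_assoc]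
      _ ≤ 2 * ∫⁻ ζ in Metric.closedBall (x 0) 1,
            (2^n * ∫⁻ y in P', w (Fin.cons ζ y)) :=
          mul_le_mul_right (setLIntegral_mono' measurableSet_closedBall hC) 2
      _ = 2^(n+1) * ∫⁻ ζ in Metric.closedBall (x 0) 1, ∫⁻ y in P', w (Fin.cons ζ y) := by
          rw [lintegral_const_mul' (2^n) _ (by simp : (2:ℝ≥0∞)^n ≠ ⊤)]
          ring
      _ = 2^(n+1) * ∫⁻ z in P, w z := by rw [key]

end Helpers

/-- Lemma 2.1 for the torus `ℂⁿ/Λ`: a uniform upper bound, depending only on `n`,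
for all admissible weights `ψ ∈ A_ε` and all `ε ∈ (0,1]`: `e^{ψ(x)} ≤ C`. -/
theorem torus_uniform_upper_bound (n : ℕ) :
    ∃ C : ℝ≥0∞, C ≠ ⊤ ∧
      ∀ ε : ℝ, ε ∈ Set.Ioc (0 : ℝ) 1 → ∀ ψ ∈ Aset n ε, ∀ x : Fin n → ℂ,
        EReal.exp (ψ x) ≤ C := by
  classical
  refine ⟨ENNReal.ofReal (Real.exp ((2:ℝ)^n * ((9:ℝ)^n + 9*n))), ENNReal.ofReal_ne_top, ?_⟩
  rintro ε ⟨hε0, hε1⟩ ψ hψ x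
  obtain ⟨hper, husc, hpsh, hint⟩ := hψ
  set Mr : ℝ := (2:ℝ)^n * ((9:ℝ)^n + 9*n) with hMr
  have hMrpos : 0 ≤ Mr := by positivity
  -- translate x into the fundamental domain
  set x' : Fin n → ℂ := fun i => x i - (⌊(x i).re⌋ : ℂ) - (⌊(x i).im⌋ : ℂ) * Complex.I
    with hx'def
  have hψx : ψ x = ψ x' := by
    have h := hper x' (fun i => ⌊(x i).re⌋) (fun i => ⌊(x i).im⌋)
    rw [← h]
    congr 1
    funext i
    simp only [hx'def]
    ring
  have hx're : ∀ i, (x' i).re = (x i).re - (⌊(x i).re⌋ : ℝ) := by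
    intro i
    simp [hx'def, Complex.sub_re, Complex.mul_re, Complex.I_re, Complex.I_im]
  have hx'im : ∀ i, (x' i).im = (x i).im - (⌊(x i).im⌋ : ℝ) := by
    intro i
    simp [hx'def, Complex.sub_im, Complex.mul_im, Complex.I_re, Complex.I_im]
  have hx'D : x' ∈ fundDomain n := by
    intro i
    constructor
    · rw [hx're]
      exact ⟨by linarith [Int.floor_le (x i).re], by linarith [Int.lt_floor_add_one (x i).re]⟩
    · rw [hx'im]
      exact ⟨by linarith [Int.floor_le (x i).im], by linarith [Int.lt_floor_add_one (x i).im]⟩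
  -- the weight and its positive part
  set u : (Fin n → ℂ) → EReal :=
    fun z => ψ z + ((ε * ∑ i, Complex.normSq (z i) : ℝ) : EReal) with hu
  set w : (Fin n → ℂ) → ℝ≥0∞ := fun z => erealToENNReal (u z) with hwdef
  have hccont : Continuous (fun z : Fin n → ℂ => (ε * ∑ i, Complex.normSq (z i) : ℝ)) :=
    continuous_const.mul (continuous_finset_sum _ fun i _ =>
      Complex.continuous_normSq.comp (continuous_apply i))
  have huusc : UpperSemicontinuous u := by
    rw [hu]
    exact husc.add' ((continuous_coe_real_ereal.comp hccont).upperSemicontinuous)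
      (fun z => EReal.continuousAt_add (Or.inr (EReal.coe_ne_bot _)) (Or.inr (EReal.coe_ne_top _)))
  have hwmeas : Measurable w := erealToENNReal_measurable.comp huusc.measurable
  -- the sub-mean value inequality for w
  have hsub : ∀ (a : Fin n → ℂ) (i : Fin n), ∀ r ∈ Ioo (1/2:ℝ) 1,
      w a * ENNReal.ofReal (2*Real.pi) ≤
        ∫⁻ θ in Ioc (0:ℝ) (2*Real.pi),
          w (Function.update a i (a i + (r:ℂ) * Complex.exp (θ*Complex.I))) := by
    intro a i r hr
    have hb : ∀ l : ℂ, a + l • (fun j => if j = i then (1:ℂ) else 0)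
        = Function.update a i (a i + l) := by
      intro l
      funext j
      by_cases hj : j = i
      · subst hj; simp
      · simp [Function.update_apply, hj]
    have hm := hpsh.2 a (mem_univ a) (fun j => if j = i then (1:ℂ) else 0) r
      (by linarith [hr.1]) (fun l _ => mem_univ _)
    have h2 := circle_ineq hm
    refine le_trans h2 (le_of_eq (lintegral_congr fun θ => ?_))
    simp only [hwdef]
    congr 1
    rw [hb]
  -- the polydisk estimate
  have hpoly := polydisk_bound n w hwmeas hsub x'
  set P : Set (Fin n → ℂ) := {z | ∀ i, ‖z i - x' i‖ ≤ 1} with hPdef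
  have hPmeas : MeasurableSet P := measurableSet_polydisk x'
  -- pointwise bound on P
  have habs' : ∀ i, ‖x' i‖ ≤ 2 := by
    intro i
    refine le_trans (Complex.norm_le_abs_re_add_abs_im _) ?_
    have h1 := (hx'D i).1
    have h2 := (hx'D i).2
    rw [abs_of_nonneg h1.1, abs_of_nonneg h2.1]
    linarith [h1.2, h2.2]
  have hpt : ∀ z ∈ P, w z ≤ EReal.exp (ψ z) + ENNReal.ofReal (9*n) := by
    intro z hz
    have hSnonneg : (0:ℝ) ≤ ∑ i, Complex.normSq (z i) :=
      Finset.sum_nonneg fun i _ => Complex.normSq_nonneg _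
    have hcb : (ε * ∑ i, Complex.normSq (z i) : ℝ) ≤ 9*n := by
      have hsum : ∑ i, Complex.normSq (z i) ≤ ∑ _i : Fin n, (9:ℝ) := by
        apply Finset.sum_le_sum
        intro i _
        have hzi : ‖z i‖ ≤ 3 := by
          calc ‖z i‖ = ‖(z i - x' i) + x' i‖ := by
                congr 1; ring
            _ ≤ ‖z i - x' i‖ + ‖x' i‖ := norm_add_le _ _
            _ ≤ 1 + 2 := add_le_add (hz i) (habs' i)
            _ = 3 := by norm_num
        calc Complex.normSq (z i) = (‖z i‖)^2 := (Complex.sq_norm _).symm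
          _ ≤ 3^2 := pow_le_pow_left₀ (norm_nonneg _) hzi 2
          _ = 9 := by norm_num
      have hsum' : ∑ i, Complex.normSq (z i) ≤ 9*n := by
        refine hsum.trans (le_of_eq ?_)
        simp [Finset.sum_const, Finset.card_univ, nsmul_eq_mul]
        ring
      calc ε * ∑ i, Complex.normSq (z i) ≤ 1 * (9*n) :=
            mul_le_mul hε1 hsum' hSnonneg one_pos.le
        _ = 9*n := one_mul _
    calc w z ≤ erealToENNReal (ψ z) + ENNReal.ofReal (ε * ∑ i, Complex.normSq (z i)) := by
          simp only [hwdef, hu]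
          exact erealToENNReal_add_coe_le _ _
      _ ≤ EReal.exp (ψ z) + ENNReal.ofReal (9*n) :=
          add_le_add (erealToENNReal_le_exp _) (ENNReal.ofReal_le_ofReal hcb)
  -- volume of the polydisk
  set p : ℝ≥0∞ := ENNReal.ofReal Real.pi with hpdef
  have hvolP : volume P ≤ p^n := by
    have hPeq : P = Set.pi univ (fun i => Metric.closedBall (x' i) 1) := by
      ext z
      simp [hPdef, Set.mem_pi, Metric.mem_closedBall, Complex.dist_eq]
    rw [hPeq, volume_pi_pi]
    apply le_of_eq
    calc ∏ i, volume (Metric.closedBall (x' i) 1) = ∏ _i : Fin n, p := by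
          apply Finset.prod_congr rfl
          intro i _
          rw [Complex.volume_closedBall, ENNReal.ofReal_one, one_pow, one_mul,
            hpdef, ← ENNReal.ofReal_coe_nnreal, NNReal.coe_real_pi]
      _ = p^n := by simp [Finset.prod_const, Finset.card_univ]
  -- covering by translates of the fundamental domain
  have hcover : ∫⁻ z in P, EReal.exp (ψ z) ≤ (9:ℝ≥0∞)^n := by
    set shift : ((Fin n → Fin 3) × (Fin n → Fin 3)) → (Fin n → ℂ) :=
      fun v i => ((((v.1 i : ℕ) : ℤ) - 1 : ℤ) : ℂ) + ((((v.2 i : ℕ) : ℤ) - 1 : ℤ) : ℂ) * Complex.I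
      with hshift
    have hTint : ∀ v, ∫⁻ z in (fun z : Fin n → ℂ => z - shift v) ⁻¹' (fundDomain n),
        EReal.exp (ψ z) = 1 := by
      intro v
      have hgeq : (fun z : Fin n → ℂ => z - shift v) = (fun z => -shift v + z) := by
        funext z; rw [sub_eq_neg_add]
      have h3 := (measurePreserving_add_left (volume : Measure (Fin n → ℂ))
        (-shift v)).setLIntegral_comp_preimage_emb
        (measurableEmbedding_addLeft (-shift v)) (fun y => EReal.exp (ψ y)) (fundDomain n)
      have hψp : ∀ z : Fin n → ℂ, ψ (-shift v + z) = ψ z := by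
        intro z
        have h4 := hper (-shift v + z) (fun i => ((v.1 i : ℕ) : ℤ) - 1)
          (fun i => ((v.2 i : ℕ) : ℤ) - 1)
        rw [← h4]
        congr 1
        funext i
        simp only [hshift, Pi.add_apply, Pi.neg_apply]
        push_cast
        ring
      rw [hgeq]
      calc ∫⁻ z in (fun z : Fin n → ℂ => -shift v + z) ⁻¹' (fundDomain n), EReal.exp (ψ z)
          = ∫⁻ z in (fun z : Fin n → ℂ => -shift v + z) ⁻¹' (fundDomain n),
              EReal.exp (ψ (-shift v + z)) := lintegral_congr fun z => by rw [hψp]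
        _ = ∫⁻ y in fundDomain n, EReal.exp (ψ y) := h3
        _ = 1 := hint
    have hsubset : P ⊆ ⋃ v : (Fin n → Fin 3) × (Fin n → Fin 3),
        (fun z : Fin n → ℂ => z - shift v) ⁻¹' (fundDomain n) := by
      intro z hz
      have hbnd : ∀ i, (-1:ℤ) ≤ ⌊(z i).re⌋ ∧ ⌊(z i).re⌋ ≤ 1
          ∧ (-1:ℤ) ≤ ⌊(z i).im⌋ ∧ ⌊(z i).im⌋ ≤ 1 := by
        intro i
        have habs := hz i
        have hre0 := (Complex.abs_re_le_norm (z i - x' i)).trans habs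
        have him0 := (Complex.abs_im_le_norm (z i - x' i)).trans habs
        rw [Complex.sub_re] at hre0
        rw [Complex.sub_im] at him0
        rw [abs_le] at hre0 him0
        have hre := hre0
        have him := him0
        have hxre := (hx'D i).1
        have hxim := (hx'D i).2
        have h1 : (-1:ℝ) ≤ (z i).re := by linarith [hre.1, hxre.1]
        have h2 : (z i).re < 2 := by linarith [hre.2, hxre.2]
        have h3 : (-1:ℝ) ≤ (z i).im := by linarith [him.1, hxim.1]
        have h4 : (z i).im < 2 := by linarith [him.2, hxim.2]
        refine ⟨Int.le_floor.mpr (by exact_mod_cast h1), ?_,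
          Int.le_floor.mpr (by exact_mod_cast h3), ?_⟩
        · have := Int.floor_lt.mpr (show (z i).re < ((2:ℤ):ℝ) by exact_mod_cast h2)
          omega
        · have := Int.floor_lt.mpr (show (z i).im < ((2:ℤ):ℝ) by exact_mod_cast h4)
          omega
      set v1 : Fin n → Fin 3 := fun i => ⟨(⌊(z i).re⌋ + 1).toNat, by have := hbnd i; omega⟩
        with hv1
      set v2 : Fin n → Fin 3 := fun i => ⟨(⌊(z i).im⌋ + 1).toNat, by have := hbnd i; omega⟩
        with hv2
      refine mem_iUnion.mpr ⟨(v1, v2), ?_⟩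
      intro i
      have hb := hbnd i
      have hc1 : (((v1 i : ℕ) : ℤ) - 1 : ℤ) = ⌊(z i).re⌋ := by
        show ((((⌊(z i).re⌋ + 1).toNat : ℕ) : ℤ) - 1 : ℤ) = ⌊(z i).re⌋
        omega
      have hc2 : (((v2 i : ℕ) : ℤ) - 1 : ℤ) = ⌊(z i).im⌋ := by
        show ((((⌊(z i).im⌋ + 1).toNat : ℕ) : ℤ) - 1 : ℤ) = ⌊(z i).im⌋
        omega
      have hre : ((z - shift (v1, v2)) i).re = (z i).re - (⌊(z i).re⌋ : ℝ) := by
        simp only [Pi.sub_apply, hshift, Complex.sub_re, Complex.add_re, Complex.mul_re,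
          Complex.I_re, Complex.I_im, Complex.intCast_re, Complex.intCast_im, hc1, hc2]
        push_cast
        ring
      have him : ((z - shift (v1, v2)) i).im = (z i).im - (⌊(z i).im⌋ : ℝ) := by
        simp only [Pi.sub_apply, hshift, Complex.sub_im, Complex.add_im, Complex.mul_im,
          Complex.I_re, Complex.I_im, Complex.intCast_re, Complex.intCast_im, hc1, hc2]
        push_cast
        ring
      constructor
      · rw [hre]
        exact ⟨by linarith [Int.floor_le (z i).re], by linarith [Int.lt_floor_add_one (z i).re]⟩
      · rw [him]
        exact ⟨by linarith [Int.floor_le (z i).im], by linarith [Int.lt_floor_add_one (z i).im]⟩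
    calc ∫⁻ z in P, EReal.exp (ψ z)
        ≤ ∫⁻ z in ⋃ v : (Fin n → Fin 3) × (Fin n → Fin 3),
            (fun z : Fin n → ℂ => z - shift v) ⁻¹' (fundDomain n), EReal.exp (ψ z) :=
          lintegral_mono_set hsubset
      _ ≤ ∑' v : (Fin n → Fin 3) × (Fin n → Fin 3),
            ∫⁻ z in (fun z : Fin n → ℂ => z - shift v) ⁻¹' (fundDomain n), EReal.exp (ψ z) :=
          lintegral_iUnion_le _ _
      _ = ∑' _v : (Fin n → Fin 3) × (Fin n → Fin 3), (1:ℝ≥0∞) := tsum_congr hTint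
      _ = (Fintype.card ((Fin n → Fin 3) × (Fin n → Fin 3)) : ℝ≥0∞) := by
          rw [tsum_eq_sum (s := Finset.univ) (fun v hv => absurd (Finset.mem_univ v) hv)]
          simp
      _ ≤ (9:ℝ≥0∞)^n := by
          have hcard : Fintype.card ((Fin n → Fin 3) × (Fin n → Fin 3)) = 3^n * 3^n := by
            simp
          rw [hcard]
          push_cast
          rw [← mul_pow]
          norm_num
  -- put everything together
  have hp1 : (1:ℝ≥0∞) ≤ p := by
    rw [hpdef, ← ENNReal.ofReal_one]
    exact ENNReal.ofReal_le_ofReal (by linarith [Real.pi_gt_three])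
  have hintP : ∫⁻ z in P, w z ≤ (9:ℝ≥0∞)^n + ENNReal.ofReal (9*n) * p^n := by
    calc ∫⁻ z in P, w z ≤ ∫⁻ z in P, (EReal.exp (ψ z) + ENNReal.ofReal (9*n)) :=
          setLIntegral_mono' hPmeas hpt
      _ = (∫⁻ z in P, EReal.exp (ψ z)) + ENNReal.ofReal (9*n) * volume P := by
          rw [lintegral_add_right _ measurable_const, setLIntegral_const]
      _ ≤ (9:ℝ≥0∞)^n + ENNReal.ofReal (9*n) * p^n :=
          add_le_add hcover (mul_le_mul_right hvolP _)
  have hfinal : w x' * p^n ≤ (ENNReal.ofReal Mr) * p^n := by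
    calc w x' * p^n ≤ 2^n * ∫⁻ z in P, w z := hpoly
      _ ≤ 2^n * ((9:ℝ≥0∞)^n + ENNReal.ofReal (9*n) * p^n) := mul_le_mul_right hintP _
      _ ≤ 2^n * ((9:ℝ≥0∞)^n * p^n + ENNReal.ofReal (9*n) * p^n) := by
          refine mul_le_mul_right (add_le_add_left ?_ _) _
          conv_lhs => rw [← mul_one ((9:ℝ≥0∞)^n)]
          refine mul_le_mul_right ?_ _
          calc (1:ℝ≥0∞) = 1^n := (one_pow n).symm
            _ ≤ p^n := pow_le_pow_left₀ zero_le_one hp1 n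
      _ = (2^n * ((9:ℝ≥0∞)^n + ENNReal.ofReal (9*n))) * p^n := by ring
      _ = ENNReal.ofReal Mr * p^n := by
          have hM : ENNReal.ofReal Mr = 2^n * ((9:ℝ≥0∞)^n + ENNReal.ofReal (9*(n:ℝ))) := by
            rw [hMr, ENNReal.ofReal_mul (by positivity : (0:ℝ) ≤ 2^n)]
            congr 1
            · rw [ENNReal.ofReal_pow (by norm_num : (0:ℝ) ≤ 2)]; norm_num
            · rw [ENNReal.ofReal_add (by positivity) (by positivity)]
              congr 1
              rw [ENNReal.ofReal_pow (by norm_num : (0:ℝ) ≤ 9)]; norm_num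
          rw [hM]
  have hwx' : w x' ≤ ENNReal.ofReal Mr := by
    have hppow0 : (p^n : ℝ≥0∞) ≠ 0 :=
      pow_ne_zero n (ne_of_gt (lt_of_lt_of_le zero_lt_one hp1))
    exact (ENNReal.mul_le_mul_iff_left hppow0 (ENNReal.pow_ne_top ENNReal.ofReal_ne_top)).mp hfinal
  have hux' : u x' ≤ (Mr : EReal) := le_coe_of_erealToENNReal_le hMrpos hwx'
  have hψx' : ψ x' ≤ (Mr : EReal) := by
    refine le_trans ?_ hux'
    rw [hu]
    exact ereal_le_add_coe_of_nonneg _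
      (mul_nonneg hε0.le (Finset.sum_nonneg fun i _ => Complex.normSq_nonneg _))
  calc EReal.exp (ψ x) = EReal.exp (ψ x') := by rw [hψx]
    _ ≤ EReal.exp ((Mr : ℝ) : EReal) := EReal.exp_monotone hψx'
    _ = ENNReal.ofReal (Real.exp Mr) := EReal.exp_coe Mr


end
end
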